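/- arXiv:2302.02149 — 8 statements merged into one kernel-verified Lean document; each statement's English description precedes it below -/
import Mathlib

section
/- Let m ≥ 2, let s : ℕ → Fin m, and let n : ℕ. Assume the tail of s beyond position n is not constantly the maximal digit, i.e. there exists j ≥ n with (s j : ℕ) ≠ m − 1. Then, with k = ∑_{i<n} (s i) · m^{n-1-i}, the Gödel encoding ψ(s) lies in the half-open interval [k/m^n, (k+1)/m^n). -/
/-- The Gödel encoding of a one-sided infinite sequence over `Fin m`. -/
noncomputable def psi (m : ℕ) (s : ℕ → Fin m) : ℝ :=
  ∑' k : ℕ, ((s k : ℕ) : ℝ) * ((m : ℝ) ^ (k + 1))⁻¹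

theorem stmt5 (m : ℕ) (hm : 2 ≤ m) (s : ℕ → Fin m) (n : ℕ)
    (h : ∃ j, n ≤ j ∧ (s j : ℕ) ≠ m - 1) :
    ∀ k : ℕ, k = ∑ i ∈ Finset.range n, (s i : ℕ) * m ^ (n - 1 - i) →
      psi m s ∈ Set.Ico ((k : ℝ) / (m : ℝ) ^ n) (((k : ℝ) + 1) / (m : ℝ) ^ n) := by
  intro k hk
  have hm0 : (0:ℝ) < m := by positivity
  have hm1 : (1:ℝ) < m := by exact_mod_cast hm
  have hminv : (m:ℝ)⁻¹ < 1 := by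
    rw [inv_lt_one_iff₀]; right; exact hm1
  have hminv0 : (0:ℝ) ≤ (m:ℝ)⁻¹ := by positivity
  set f : ℕ → ℝ := fun j => ((s j : ℕ) : ℝ) * ((m : ℝ) ^ (j + 1))⁻¹ with hf
  set g : ℕ → ℝ := fun j => ((m:ℝ) - 1) * ((m : ℝ) ^ (j + 1))⁻¹ with hg
  have hfg : ∀ j, f j ≤ g j := by
    intro j
    apply mul_le_mul_of_nonneg_right _ (by positivity)
    have := (s j).isLt
    have : (s j : ℕ) ≤ m - 1 := Nat.le_sub_one_of_lt this
    have : ((s j : ℕ) : ℝ) ≤ ((m - 1 : ℕ) : ℝ) := by exact_mod_cast this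
    calc ((s j : ℕ) : ℝ) ≤ ((m - 1 : ℕ) : ℝ) := this
      _ = (m:ℝ) - 1 := by
          have : (1:ℕ) ≤ m := by omega
          push_cast [this]; ring
  have hgeq : ∀ j, g j = ((m:ℝ) - 1) * (m:ℝ)⁻¹ * ((m:ℝ)⁻¹)^j := by
    intro j
    simp only [hg]
    rw [pow_succ, mul_inv, inv_pow]
    ring
  have hgsum : Summable g := by
    apply Summable.congr _ (fun j => (hgeq j).symm)
    exact (summable_geometric_of_lt_one hminv0 hminv).mul_left _
  have hf0 : ∀ j, 0 ≤ f j := fun j => by positivity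
  have hfsum : Summable f := Summable.of_nonneg_of_le hf0 hfg hgsum
  -- split psi at n
  have hsplit : psi m s = (∑ i ∈ Finset.range n, f i) + ∑' j, f (j + n) :=
    (Summable.sum_add_tsum_nat_add n hfsum).symm
  -- head equals k / m^n
  have hhead : (∑ i ∈ Finset.range n, f i) = (k:ℝ) / (m:ℝ)^n := by
    rw [hk]
    push_cast
    rw [Finset.sum_div]
    apply Finset.sum_congr rfl
    intro i hi
    have hi' : i < n := Finset.mem_range.mp hi
    rw [hf]
    have hpow : (m:ℝ)^(n - 1 - i) * (m:ℝ)^(i+1) = (m:ℝ)^n := by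
      rw [← pow_add]; congr 1; omega
    field_simp
    rw [← hpow]; ring
  -- tail bounds
  have htail0 : 0 ≤ ∑' j, f (j + n) := tsum_nonneg (fun j => hf0 _)
  -- tail geometric sum
  have hgtail : ∑' j, g (j + n) = ((m:ℝ)^n)⁻¹ := by
    have : ∀ j, g (j + n) = (((m:ℝ) - 1) * ((m:ℝ)^(n+1))⁻¹) * ((m:ℝ)⁻¹)^j := by
      intro j
      simp only [hg, ← inv_pow, ← pow_add]
      ring
    rw [tsum_congr this, tsum_mul_left, tsum_geometric_of_lt_one hminv0 hminv]
    have hne : (m:ℝ) - 1 ≠ 0 := by linarith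
    have hne2 : (m:ℝ) ≠ 0 := by linarith
    field_simp
    ring
  obtain ⟨j0, hj0, hj0ne⟩ := h
  have htaillt : ∑' j, f (j + n) < ∑' j, g (j + n) := by
    apply Summable.tsum_lt_tsum (i := j0 - n) (fun j => hfg _) _
      (hfsum.comp_injective (add_left_injective n))
      (hgsum.comp_injective (add_left_injective n))
    have hidx : j0 - n + n = j0 := by omega
    rw [hidx]
    have hlt : (s j0 : ℕ) < m - 1 := by
      have := (s j0).isLt; omega
    have hltR : ((s j0 : ℕ) : ℝ) < (m:ℝ) - 1 := by
      have : ((s j0 : ℕ) : ℝ) < ((m - 1 : ℕ) : ℝ) := by exact_mod_cast hlt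
      have h1 : (1:ℕ) ≤ m := by omega
      rwa [Nat.cast_sub h1, Nat.cast_one] at this
    exact mul_lt_mul_of_pos_right hltR (by positivity)
  rw [hgtail] at htaillt
  constructor
  · rw [hsplit, hhead]; linarith
  · rw [hsplit, hhead]
    have : (↑k + 1) / (m:ℝ)^n = (k:ℝ)/(m:ℝ)^n + ((m:ℝ)^n)⁻¹ := by
      field_simp
    rw [this]; linarith
end

section
/- Let m ≥ 2 and let p, q : ℕ → Fin m be non-degenerate sequences. Then for every n : ℕ, the sequences p and q agree on their first n entries (p i = q i for all i < n) if and only if there exists a natural number k < m^n such that both ψ(p) and ψ(q) lie in the half-open interval [k/m^n, (k+1)/m^n). -/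
/-- A sequence is non-degenerate if it is not eventually equal to the maximal digit. -/
def NonDegenerate (m : ℕ) (s : ℕ → Fin m) : Prop :=
  ∀ N : ℕ, ∃ k, N ≤ k ∧ (s k : ℕ) ≠ m - 1

namespace Stmt6Aux

/-- value of the first n digits as a natural number -/
def dval (m : ℕ) (s : ℕ → Fin m) : ℕ → ℕ
  | 0 => 0
  | n + 1 => m * dval m s n + (s n : ℕ)

lemma dval_lt (m : ℕ) (hm : 1 ≤ m) (s : ℕ → Fin m) (n : ℕ) : dval m s n < m ^ n := by
  induction n with
  | zero => simp [dval]
  | succ n ih =>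
    have hs : (s n : ℕ) < m := (s n).2
    calc dval m s (n + 1) = m * dval m s n + (s n : ℕ) := rfl
      _ < m * dval m s n + m := by omega
      _ = m * (dval m s n + 1) := by ring
      _ ≤ m * m ^ n := Nat.mul_le_mul_left _ (by omega)
      _ = m ^ (n + 1) := by ring

variable {m : ℕ}

lemma hm0 (hm : 2 ≤ m) : (0 : ℝ) < (m : ℝ) := by
  have : (2 : ℝ) ≤ (m : ℝ) := by exact_mod_cast hm
  linarith

lemma summable_aux (hm : 2 ≤ m) (s : ℕ → Fin m) :
    Summable (fun k : ℕ => ((s k : ℕ) : ℝ) * ((m : ℝ) ^ (k + 1))⁻¹) := by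
  have hm0 : (0 : ℝ) < (m : ℝ) := hm0 hm
  have hg : Summable (fun k : ℕ => (m : ℝ) * ((m : ℝ)⁻¹) ^ k) := by
    apply Summable.mul_left
    apply summable_geometric_of_lt_one (by positivity)
    rw [inv_lt_one_iff₀]
    right
    exact_mod_cast lt_of_lt_of_le one_lt_two hm
  apply Summable.of_nonneg_of_le (fun k => by positivity) _ hg
  intro k
  have hs : ((s k : ℕ) : ℝ) ≤ (m : ℝ) := by
    exact_mod_cast le_of_lt (s k).2
  have h1 : ((m : ℝ) ^ (k + 1))⁻¹ ≤ ((m : ℝ)⁻¹) ^ k := by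
    have e : ((m : ℝ) ^ (k + 1))⁻¹ = ((m:ℝ)⁻¹) ^ (k+1) := by rw [← inv_pow]
    rw [e, pow_succ]
    have hik : (0:ℝ) < ((m:ℝ)⁻¹) ^ k := by positivity
    have him : (m:ℝ)⁻¹ ≤ 1 := by
      apply inv_le_one_of_one_le₀
      exact le_of_lt (lt_of_lt_of_le one_lt_two (by exact_mod_cast hm : (2:ℝ) ≤ m))
    nlinarith
  calc ((s k : ℕ) : ℝ) * ((m : ℝ) ^ (k + 1))⁻¹ ≤ (m : ℝ) * ((m : ℝ) ^ (k + 1))⁻¹ := by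
        apply mul_le_mul_of_nonneg_right hs (by positivity)
    _ ≤ (m : ℝ) * ((m : ℝ)⁻¹) ^ k := by
        apply mul_le_mul_of_nonneg_left h1 (le_of_lt hm0)

lemma partial_eq (hm : 2 ≤ m) (s : ℕ → Fin m) (n : ℕ) :
    ∑ i ∈ Finset.range n, ((s i : ℕ) : ℝ) * ((m : ℝ) ^ (i + 1))⁻¹
      = (dval m s n : ℝ) / (m : ℝ) ^ n := by
  have hm0 : (0 : ℝ) < (m : ℝ) := hm0 hm
  induction n with
  | zero => simp [dval]
  | succ n ih =>
    rw [Finset.sum_range_succ, ih]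
    have : (dval m s (n + 1) : ℝ) = (m : ℝ) * (dval m s n : ℝ) + ((s n : ℕ) : ℝ) := by
      show ((m * dval m s n + (s n : ℕ) : ℕ) : ℝ) = _
      push_cast; ring
    rw [this]
    field_simp
    ring

lemma geom_tail (hm : 2 ≤ m) (n : ℕ) :
    ∑' k : ℕ, ((m : ℝ) - 1) * ((m : ℝ) ^ (k + n + 1))⁻¹ = ((m : ℝ) ^ n)⁻¹ := by
  have hm0 : (0 : ℝ) < (m : ℝ) := hm0 hm
  have hm1 : (1 : ℝ) < (m : ℝ) := lt_of_lt_of_le one_lt_two (by exact_mod_cast hm)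
  have hrw : (fun k : ℕ => ((m : ℝ) - 1) * ((m : ℝ) ^ (k + n + 1))⁻¹)
      = fun k : ℕ => (((m : ℝ) - 1) * ((m : ℝ) ^ (n + 1))⁻¹) * ((m : ℝ)⁻¹) ^ k := by
    funext k
    rw [show k + n + 1 = (n + 1) + k by ring, pow_add, mul_inv, ← inv_pow]
    ring
  rw [hrw, tsum_mul_left, tsum_geometric_of_lt_one (by positivity)
    (by rw [inv_lt_one_iff₀]; right; exact hm1)]
  have hne : (m : ℝ) ≠ 0 := ne_of_gt hm0
  have hne1 : (m : ℝ) - 1 ≠ 0 := by linarith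
  field_simp
  ring

lemma psi_mem (hm : 2 ≤ m) (s : ℕ → Fin m) (hs : NonDegenerate m s) (n : ℕ) :
    psi m s ∈ Set.Ico ((dval m s n : ℝ) / (m : ℝ) ^ n)
      (((dval m s n : ℝ) + 1) / (m : ℝ) ^ n) := by
  have hm0 : (0 : ℝ) < (m : ℝ) := hm0 hm
  have hsum := summable_aux hm s
  set f : ℕ → ℝ := fun k => ((s k : ℕ) : ℝ) * ((m : ℝ) ^ (k + 1))⁻¹ with hf
  have hsplit : ∑ i ∈ Finset.range n, f i + ∑' k : ℕ, f (k + n) = ∑' k, f k :=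
    Summable.sum_add_tsum_nat_add n hsum
  have hpsi : psi m s = (dval m s n : ℝ) / (m : ℝ) ^ n + ∑' k : ℕ, f (k + n) := by
    rw [psi, ← hsplit, partial_eq hm]
  have htail_sum : Summable (fun k : ℕ => f (k + n)) := hsum.comp_injective (add_left_injective n)
  have htail0 : 0 ≤ ∑' k : ℕ, f (k + n) := tsum_nonneg (fun k => by positivity)
  -- strict upper bound for tail
  obtain ⟨k0, hk0n, hk0⟩ := hs n
  have hg : ∀ k : ℕ, f (k + n) ≤ ((m : ℝ) - 1) * ((m : ℝ) ^ (k + n + 1))⁻¹ := by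
    intro k
    apply mul_le_mul_of_nonneg_right _ (by positivity)
    have : (s (k + n) : ℕ) < m := (s (k + n)).2
    have : (s (k + n) : ℕ) ≤ m - 1 := by omega
    have h2 : ((s (k + n) : ℕ) : ℝ) ≤ ((m - 1 : ℕ) : ℝ) := by exact_mod_cast this
    have h3 : ((m - 1 : ℕ) : ℝ) = (m : ℝ) - 1 := by
      have : 1 ≤ m := by omega
      push_cast [this]; ring
    linarith
  have hstrict : f (k0 - n + n) < ((m : ℝ) - 1) * ((m : ℝ) ^ ((k0 - n) + n + 1))⁻¹ := by
    have hkeq : k0 - n + n = k0 := by omega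
    rw [hkeq]
    apply mul_lt_mul_of_pos_right _ (by positivity)
    have h1 : (s k0 : ℕ) < m := (s k0).2
    have h2 : (s k0 : ℕ) + 1 ≤ m - 1 := by omega
    have : ((s k0 : ℕ) : ℝ) + 1 ≤ ((m - 1 : ℕ) : ℝ) := by exact_mod_cast h2
    have h3 : ((m - 1 : ℕ) : ℝ) = (m : ℝ) - 1 := by
      have : 1 ≤ m := by omega
      push_cast [this]; ring
    linarith
  have hgsum : Summable (fun k : ℕ => ((m : ℝ) - 1) * ((m : ℝ) ^ (k + n + 1))⁻¹) := by
    have := (summable_aux hm s).comp_injective (add_left_injective n)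
    -- easier: it's geometric
    have hrw : (fun k : ℕ => ((m : ℝ) - 1) * ((m : ℝ) ^ (k + n + 1))⁻¹)
        = fun k : ℕ => (((m : ℝ) - 1) * ((m : ℝ) ^ (n + 1))⁻¹) * ((m : ℝ)⁻¹) ^ k := by
      funext k
      rw [show k + n + 1 = (n + 1) + k by ring, pow_add, mul_inv, ← inv_pow]
      ring
    rw [hrw]
    apply Summable.mul_left
    apply summable_geometric_of_lt_one (by positivity)
    rw [inv_lt_one_iff₀]; right
    exact_mod_cast lt_of_lt_of_le one_lt_two hm
  have htail_lt : ∑' k : ℕ, f (k + n) < ((m : ℝ) ^ n)⁻¹ := by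
    calc ∑' k : ℕ, f (k + n) < ∑' k : ℕ, ((m : ℝ) - 1) * ((m : ℝ) ^ (k + n + 1))⁻¹ :=
          Summable.tsum_lt_tsum hg hstrict htail_sum hgsum
      _ = ((m : ℝ) ^ n)⁻¹ := geom_tail hm n
  constructor
  · rw [hpsi]; linarith
  · rw [hpsi]
    have : ((dval m s n : ℝ) + 1) / (m : ℝ) ^ n
        = (dval m s n : ℝ) / (m : ℝ) ^ n + ((m : ℝ) ^ n)⁻¹ := by
      field_simp
    rw [this]
    linarith

lemma dval_inj (s t : ℕ → Fin m) (n : ℕ)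
    (h : dval m s n = dval m t n) : ∀ i < n, s i = t i := by
  induction n with
  | zero => intro i hi; omega
  | succ n ih =>
    have hs : (s n : ℕ) < m := (s n).2
    have ht : (t n : ℕ) < m := (t n).2
    have h' : m * dval m s n + (s n : ℕ) = m * dval m t n + (t n : ℕ) := h
    have hmod : (s n : ℕ) = (t n : ℕ) := by
      have e1 : (m * dval m s n + (s n : ℕ)) % m = (s n : ℕ) := by
        rw [Nat.mul_add_mod]; exact Nat.mod_eq_of_lt hs
      have e2 : (m * dval m t n + (t n : ℕ)) % m = (t n : ℕ) := by
        rw [Nat.mul_add_mod]; exact Nat.mod_eq_of_lt ht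
      rw [← e1, ← e2, h']
    have hd : dval m s n = dval m t n := by
      have hm1 : 0 < m := by omega
      have := h'
      rw [hmod] at this
      exact Nat.eq_of_mul_eq_mul_left hm1 (by omega)
    intro i hi
    rcases Nat.lt_succ_iff_lt_or_eq.mp hi with h | h
    · exact ih hd i h
    · subst h; exact Fin.ext hmod

lemma dval_congr (s t : ℕ → Fin m) (n : ℕ) (h : ∀ i < n, s i = t i) :
    dval m s n = dval m t n := by
  induction n with
  | zero => rfl
  | succ n ih =>
    have h1 : dval m s n = dval m t n := ih (fun i hi => h i (by omega))
    show m * dval m s n + (s n : ℕ) = m * dval m t n + (t n : ℕ)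
    rw [h1, h n (by omega)]

end Stmt6Aux

theorem stmt6 (m : ℕ) (hm : 2 ≤ m) (p q : ℕ → Fin m)
    (hp : NonDegenerate m p) (hq : NonDegenerate m q) (n : ℕ) :
    (∀ i < n, p i = q i) ↔
      ∃ k : ℕ, k < m ^ n ∧
        psi m p ∈ Set.Ico ((k : ℝ) / (m : ℝ) ^ n) (((k : ℝ) + 1) / (m : ℝ) ^ n) ∧
        psi m q ∈ Set.Ico ((k : ℝ) / (m : ℝ) ^ n) (((k : ℝ) + 1) / (m : ℝ) ^ n) := by
  open Stmt6Aux in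
  have hmpos : (0 : ℝ) < (m : ℝ) ^ n := by
    have : (0:ℝ) < (m:ℝ) := Stmt6Aux.hm0 hm
    positivity
  constructor
  · intro h
    refine ⟨Stmt6Aux.dval m p n, Stmt6Aux.dval_lt m (by omega) p n, ?_, ?_⟩
    · exact Stmt6Aux.psi_mem hm p hp n
    · rw [Stmt6Aux.dval_congr p q n h]
      exact Stmt6Aux.psi_mem hm q hq n
  · rintro ⟨k, hk, ⟨hp1, hp2⟩, ⟨hq1, hq2⟩⟩
    have hmemp := Stmt6Aux.psi_mem hm p hp n
    have hmemq := Stmt6Aux.psi_mem hm q hq n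
    have key : ∀ (s : ℕ → Fin m), psi m s ∈ Set.Ico ((k : ℝ) / (m : ℝ) ^ n) (((k : ℝ) + 1) / (m : ℝ) ^ n) →
        psi m s ∈ Set.Ico ((Stmt6Aux.dval m s n : ℝ) / (m : ℝ) ^ n)
          (((Stmt6Aux.dval m s n : ℝ) + 1) / (m : ℝ) ^ n) → k = Stmt6Aux.dval m s n := by
      rintro s ⟨h1, h2⟩ ⟨h3, h4⟩
      have hlt1 : (k : ℝ) / (m : ℝ) ^ n < ((Stmt6Aux.dval m s n : ℝ) + 1) / (m : ℝ) ^ n :=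
        lt_of_le_of_lt h1 h4
      have hlt2 : (Stmt6Aux.dval m s n : ℝ) / (m : ℝ) ^ n < ((k : ℝ) + 1) / (m : ℝ) ^ n :=
        lt_of_le_of_lt h3 h2
      have e1 : (k : ℝ) < (Stmt6Aux.dval m s n : ℝ) + 1 := by
        exact (div_lt_div_iff_of_pos_right hmpos).mp hlt1
      have e2 : (Stmt6Aux.dval m s n : ℝ) < (k : ℝ) + 1 := by
        exact (div_lt_div_iff_of_pos_right hmpos).mp hlt2
      have : k < Stmt6Aux.dval m s n + 1 := by exact_mod_cast e1
      have : Stmt6Aux.dval m s n < k + 1 := by exact_mod_cast e2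
      omega
    have hkp := key p ⟨hp1, hp2⟩ hmemp
    have hkq := key q ⟨hq1, hq2⟩ hmemq
    exact Stmt6Aux.dval_inj p q n (by omega)
end

section
/- Let m ≥ 2, l : ℕ, π a permutation of Fin m, and x ∈ [0,1). Then the cell-permutation map satisfies: (a) ρ_π(x) ∈ [0,1); (b) for every i < l, the i-th base-m digit of ρ_π(x) equals π applied to the i-th base-m digit of x, i.e. c_i(ρ_π(x)) = π(c_i(x)); and (c) for every i ≥ l, c_i(ρ_π(x)) = c_i(x). -/
/-- The `i`-th base-`m` digit of `x ∈ [0,1)`. -/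
noncomputable def digit (m : ℕ) [NeZero m] (x : ℝ) (i : ℕ) : Fin m :=
  ⟨(⌊x * (m : ℝ) ^ (i + 1)⌋).toNat % m,
    Nat.mod_lt _ (Nat.pos_of_ne_zero (NeZero.ne m))⟩

/-- The cell-permutation map at depth `l` induced by a permutation `π` of the digits. -/
noncomputable def rho (m : ℕ) [NeZero m] (l : ℕ) (π : Equiv.Perm (Fin m)) (x : ℝ) : ℝ :=
  x + ∑ i ∈ Finset.range l,
    (((π (digit m x i) : ℕ) : ℝ) - ((digit m x i : ℕ) : ℝ)) * ((m : ℝ) ^ (i + 1))⁻¹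

namespace Stmt11

noncomputable def C (m : ℕ) [NeZero m] (x : ℝ) (i : ℕ) : ℤ := ((digit m x i : ℕ) : ℤ)

noncomputable def P (m : ℕ) [NeZero m] (π : Equiv.Perm (Fin m)) (x : ℝ) (i : ℕ) : ℤ :=
  ((π (digit m x i) : ℕ) : ℤ)

variable {m : ℕ} [NeZero m]

lemma hM : (0:ℝ) < (m:ℝ) := by exact_mod_cast Nat.pos_of_ne_zero (NeZero.ne m)

lemma C_nonneg (x : ℝ) (i : ℕ) : 0 ≤ C m x i := Int.natCast_nonneg _
lemma C_lt (x : ℝ) (i : ℕ) : C m x i < m := by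
  simpa [C] using (digit m x i).isLt
lemma P_nonneg (π : Equiv.Perm (Fin m)) (x : ℝ) (i : ℕ) : 0 ≤ P m π x i := Int.natCast_nonneg _
lemma P_lt (π : Equiv.Perm (Fin m)) (x : ℝ) (i : ℕ) : P m π x i < m := by
  simpa [P] using (π (digit m x i)).isLt

lemma C_floor (x : ℝ) (hx : 0 ≤ x) (i : ℕ) :
    C m x i = ⌊(m:ℝ) * Int.fract ((m:ℝ)^i * x)⌋ := by
  have hM0 : (0:ℝ) < (m:ℝ) := hM
  set y : ℝ := (m:ℝ)^i * x with hy
  have hC : C m x i = ⌊x * (m:ℝ)^(i+1)⌋ % m := by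
    have h0 : (0:ℤ) ≤ ⌊x * (m:ℝ)^(i+1)⌋ := Int.floor_nonneg.mpr (by positivity)
    simp only [C, digit]
    push_cast
    rw [Int.toNat_of_nonneg h0]
  have hsplit : x * (m:ℝ)^(i+1) = ((m : ℤ) * ⌊y⌋ : ℤ) + (m:ℝ) * Int.fract y := by
    have : Int.fract y = y - ⌊y⌋ := rfl
    push_cast
    rw [this, hy]
    ring
  have hfl : ⌊x * (m:ℝ)^(i+1)⌋ = (m : ℤ) * ⌊y⌋ + ⌊(m:ℝ) * Int.fract y⌋ := by
    rw [hsplit, Int.floor_intCast_add]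
  have hq0 : (0:ℤ) ≤ ⌊(m:ℝ) * Int.fract y⌋ :=
    Int.floor_nonneg.mpr (mul_nonneg hM0.le (Int.fract_nonneg y))
  have hqm : ⌊(m:ℝ) * Int.fract y⌋ < (m:ℤ) := by
    apply Int.floor_lt.mpr
    push_cast
    calc (m:ℝ) * Int.fract y < (m:ℝ) * 1 := by
          exact mul_lt_mul_of_pos_left (Int.fract_lt_one y) hM0
      _ = m := mul_one _
  have hmpos : (0:ℤ) < (m:ℤ) := by exact_mod_cast Nat.pos_of_ne_zero (NeZero.ne m)
  rw [hC, hfl, add_comm, Int.add_mul_emod_self_left, Int.emod_eq_of_lt hq0 hqm]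

lemma fract_succ (x : ℝ) (hx : 0 ≤ x) (i : ℕ) :
    Int.fract ((m:ℝ)^(i+1) * x) = (m:ℝ) * Int.fract ((m:ℝ)^i * x) - C m x i := by
  set y : ℝ := (m:ℝ)^i * x with hy
  have hsplit : (m:ℝ)^(i+1) * x = ((m : ℤ) * ⌊y⌋ : ℤ) + (m:ℝ) * Int.fract y := by
    have : Int.fract y = y - ⌊y⌋ := rfl
    push_cast
    rw [this, hy]
    ring
  rw [hsplit, Int.fract_intCast_add, C_floor x hx i]
  rfl

lemma telescope (x : ℝ) (hx : 0 ≤ x) (d k : ℕ) :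
    (m:ℝ)^d * Int.fract ((m:ℝ)^k * x) =
      (∑ j ∈ Finset.range d, (C m x (k+j) : ℝ) * (m:ℝ)^(d-1-j)) +
        Int.fract ((m:ℝ)^(k+d) * x) := by
  induction d with
  | zero => simp
  | succ d ih =>
    have step := fract_succ (m := m) x hx (k + d)
    have : (m:ℝ)^(d+1) * Int.fract ((m:ℝ)^k * x)
        = (m:ℝ) * ((m:ℝ)^d * Int.fract ((m:ℝ)^k * x)) := by ring
    rw [this, ih, Finset.sum_range_succ]
    have hpow : ∀ j ∈ Finset.range d, (m:ℝ) * ((C m x (k+j) : ℝ) * (m:ℝ)^(d-1-j))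
        = (C m x (k+j) : ℝ) * (m:ℝ)^(d+1-1-j) := by
      intro j hj
      have hj' : j < d := Finset.mem_range.mp hj
      have : d + 1 - 1 - j = (d - 1 - j) + 1 := by omega
      rw [this, pow_succ]
      ring
    rw [mul_add, Finset.mul_sum, Finset.sum_congr rfl hpow]
    have : (m:ℝ) * Int.fract ((m:ℝ)^(k+d) * x)
        = Int.fract ((m:ℝ)^(k+(d+1)) * x) + (C m x (k+d) : ℝ) := by
      have h2 : k + (d+1) = (k+d) + 1 := by omega
      rw [h2, step]; ring
    rw [this]
    have : d + 1 - 1 - d = 0 := by omega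
    rw [this]
    ring


lemma C_eq_mod (x : ℝ) (hx : 0 ≤ x) (i : ℕ) :
    C m x i = ⌊x * (m:ℝ)^(i+1)⌋ % m := by
  have h0 : (0:ℤ) ≤ ⌊x * (m:ℝ)^(i+1)⌋ := Int.floor_nonneg.mpr (by positivity)
  simp only [C, digit]
  push_cast
  rw [Int.toNat_of_nonneg h0]

noncomputable def A (m : ℕ) [NeZero m] (l : ℕ) (π : Equiv.Perm (Fin m)) (x : ℝ) (k : ℕ) : ℤ :=
  ∑ i ∈ Finset.range (min k l), (P m π x i - C m x i) * (m:ℤ)^(k-1-i)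

lemma rho_expand (l : ℕ) (π : Equiv.Perm (Fin m)) (x : ℝ) (k : ℕ) :
    (m:ℝ)^k * rho m l π x = (m:ℝ)^k * x +
      ∑ i ∈ Finset.range l,
        ((P m π x i : ℝ) - (C m x i : ℝ)) * ((m:ℝ)^k * ((m:ℝ)^(i+1))⁻¹) := by
  rw [rho, mul_add, Finset.mul_sum]
  congr 1
  refine Finset.sum_congr rfl fun i _ => ?_
  simp only [P, C]
  push_cast
  ring

lemma geom (k l : ℕ) :
    ∑ i ∈ Finset.Ico k l, ((m:ℝ) - 1) * (m:ℝ)^(l-1-i) = (m:ℝ)^(l-k) - 1 := by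
  rw [Finset.sum_Ico_eq_sum_range]
  have h1 : ∀ j ∈ Finset.range (l-k),
      ((m:ℝ)-1) * (m:ℝ)^(l-1-(k+j)) = (fun t => ((m:ℝ)-1) * (m:ℝ)^t) ((l-k)-1-j) := by
    intro j hj
    simp only
    congr 2
    omega
  rw [Finset.sum_congr rfl h1, Finset.sum_range_reflect (fun t => ((m:ℝ)-1) * (m:ℝ)^t) (l-k)]
  have h2 : ∀ j ∈ Finset.range (l-k), ((m:ℝ)-1) * (m:ℝ)^j = (m:ℝ)^j * ((m:ℝ)-1) := by
    intro j _; ring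
  rw [Finset.sum_congr rfl h2, ← Finset.sum_mul, geom_sum_mul]

lemma floor_rho (l : ℕ) (π : Equiv.Perm (Fin m)) (x : ℝ)
    (hx : x ∈ Set.Ico (0:ℝ) 1) (k : ℕ) :
    ⌊(m:ℝ)^k * rho m l π x⌋ = ⌊(m:ℝ)^k * x⌋ + A m l π x k := by
  obtain ⟨hx0, hx1⟩ := hx
  have hM0 : (0:ℝ) < (m:ℝ) := hM
  have hMne : (m:ℝ) ≠ 0 := hM0.ne'
  rcases le_or_gt l k with hlk | hkl
  · -- integer shift case
    have hA : A m l π x k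
        = ∑ i ∈ Finset.range l, (P m π x i - C m x i) * (m:ℤ)^(k-1-i) := by
      rw [A, min_eq_right hlk]
    have hrho : (m:ℝ)^k * rho m l π x = (m:ℝ)^k * x + ((A m l π x k : ℤ) : ℝ) := by
      rw [rho_expand, hA]
      push_cast
      congr 1
      refine Finset.sum_congr rfl fun i hi => ?_
      have hi' : i < l := Finset.mem_range.mp hi
      have hp : (m:ℝ)^k * ((m:ℝ)^(i+1))⁻¹ = (m:ℝ)^(k-1-i) := by
        rw [← pow_sub₀ _ hMne (by omega : i+1 ≤ k)]
        congr 1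
        omega
      rw [hp]
    rw [hrho, Int.floor_add_intCast]
  · -- k < l
    have hkl' : k ≤ l := hkl.le
    set d := l - k with hd
    set z : ℤ := ⌊(m:ℝ)^k * x⌋ + A m l π x k with hz
    set T : ℝ := (∑ i ∈ Finset.Ico k l, (P m π x i : ℝ) * (m:ℝ)^(l-1-i))
        + Int.fract ((m:ℝ)^l * x) with hT
    -- key identity
    have e1 : (m:ℝ)^l * rho m l π x = (m:ℝ)^l * x +
        ∑ i ∈ Finset.range l, ((P m π x i : ℝ) - (C m x i : ℝ)) * (m:ℝ)^(l-1-i) := by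
      rw [rho_expand]
      congr 1
      refine Finset.sum_congr rfl fun i hi => ?_
      have hi' : i < l := Finset.mem_range.mp hi
      have hp : (m:ℝ)^l * ((m:ℝ)^(i+1))⁻¹ = (m:ℝ)^(l-1-i) := by
        rw [← pow_sub₀ _ hMne (by omega : i+1 ≤ l)]
        congr 1
        omega
      rw [hp]
    have e2 : (m:ℝ)^l * x = (m:ℝ)^d * (⌊(m:ℝ)^k * x⌋ : ℝ) +
        ((∑ i ∈ Finset.Ico k l, (C m x i : ℝ) * (m:ℝ)^(l-1-i)) + Int.fract ((m:ℝ)^l * x)) := by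
      have t1 := telescope (m := m) x hx0 d k
      have hkd : k + d = l := by omega
      rw [hkd] at t1
      have t2 : ∑ j ∈ Finset.range d, (C m x (k+j) : ℝ) * (m:ℝ)^(d-1-j)
          = ∑ i ∈ Finset.Ico k l, (C m x i : ℝ) * (m:ℝ)^(l-1-i) := by
        rw [Finset.sum_Ico_eq_sum_range]
        refine Finset.sum_congr rfl fun j hj => ?_
        congr 2
        omega
      have t3 : (m:ℝ)^l * x = (m:ℝ)^d * ((⌊(m:ℝ)^k * x⌋ : ℝ) + Int.fract ((m:ℝ)^k * x)) := by
        rw [Int.floor_add_fract, ← mul_assoc, ← pow_add]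
        congr 2
        omega
      rw [t2] at t1
      linarith [t1, t3]
    have e3 : ∑ i ∈ Finset.range l, ((P m π x i : ℝ) - (C m x i : ℝ)) * (m:ℝ)^(l-1-i)
        = (∑ i ∈ Finset.Ico 0 k, ((P m π x i : ℝ) - (C m x i : ℝ)) * (m:ℝ)^(l-1-i))
          + ∑ i ∈ Finset.Ico k l, ((P m π x i : ℝ) - (C m x i : ℝ)) * (m:ℝ)^(l-1-i) := by
      rw [Finset.range_eq_Ico, Finset.sum_Ico_consecutive _ (Nat.zero_le k) hkl']
    have e4 : ∑ i ∈ Finset.Ico 0 k, ((P m π x i : ℝ) - (C m x i : ℝ)) * (m:ℝ)^(l-1-i)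
        = (m:ℝ)^d * ((A m l π x k : ℤ) : ℝ) := by
      rw [A, min_eq_left hkl', ← Finset.range_eq_Ico]
      push_cast
      rw [Finset.mul_sum]
      refine Finset.sum_congr rfl fun i hi => ?_
      have hi' : i < k := Finset.mem_range.mp hi
      have hp : (m:ℝ)^d * (m:ℝ)^(k-1-i) = (m:ℝ)^(l-1-i) := by
        rw [← pow_add]
        congr 1
        omega
      rw [← hp]
      ring
    have e5 : ∑ i ∈ Finset.Ico k l, ((P m π x i : ℝ) - (C m x i : ℝ)) * (m:ℝ)^(l-1-i)
        = (∑ i ∈ Finset.Ico k l, (P m π x i : ℝ) * (m:ℝ)^(l-1-i))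
          - ∑ i ∈ Finset.Ico k l, (C m x i : ℝ) * (m:ℝ)^(l-1-i) := by
      rw [← Finset.sum_sub_distrib]
      refine Finset.sum_congr rfl fun i _ => by ring
    have key : (m:ℝ)^l * rho m l π x = (m:ℝ)^d * ((z : ℤ) : ℝ) + T := by
      have hzc : ((z : ℤ) : ℝ) = (⌊(m:ℝ)^k * x⌋ : ℝ) + ((A m l π x k : ℤ) : ℝ) := by
        rw [hz]; push_cast; ring
      rw [hzc, hT, e1]
      linarith [e2, e3, e4, e5]
    -- bounds on T
    have hT0 : 0 ≤ T := by
      rw [hT]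
      have : ∀ i ∈ Finset.Ico k l, 0 ≤ (P m π x i : ℝ) * (m:ℝ)^(l-1-i) := by
        intro i _
        have : (0:ℝ) ≤ (P m π x i : ℝ) := by exact_mod_cast P_nonneg π x i
        positivity
      have := Finset.sum_nonneg this
      have := Int.fract_nonneg ((m:ℝ)^l * x)
      linarith
    have hTd : T < (m:ℝ)^d := by
      have hle : ∑ i ∈ Finset.Ico k l, (P m π x i : ℝ) * (m:ℝ)^(l-1-i)
          ≤ ∑ i ∈ Finset.Ico k l, ((m:ℝ) - 1) * (m:ℝ)^(l-1-i) := by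
        refine Finset.sum_le_sum fun i _ => ?_
        have h1 : (P m π x i : ℝ) ≤ (m:ℝ) - 1 := by
          have := P_lt π x i
          have : (P m π x i : ℝ) + 1 ≤ (m:ℝ) := by exact_mod_cast this
          linarith
        have h2 : (0:ℝ) ≤ (m:ℝ)^(l-1-i) := by positivity
        exact mul_le_mul_of_nonneg_right h1 h2
      rw [geom] at hle
      have hf := Int.fract_lt_one ((m:ℝ)^l * x)
      rw [hT]
      calc _ ≤ ((m:ℝ)^(l-k) - 1) + Int.fract ((m:ℝ)^l * x) := by linarith
        _ < (m:ℝ)^d := by rw [hd]; linarith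
    -- divide
    have hpd : (0:ℝ) < (m:ℝ)^d := by positivity
    have key2 : (m:ℝ)^k * rho m l π x = ((z : ℤ) : ℝ) + T / (m:ℝ)^d := by
      apply mul_left_cancel₀ (ne_of_gt hpd)
      rw [mul_add, mul_div_cancel₀ _ (ne_of_gt hpd), ← mul_assoc, ← pow_add]
      have : d + k = l := by omega
      rw [this, key]
    have hfr : ⌊T / (m:ℝ)^d⌋ = 0 := by
      apply Int.floor_eq_zero_iff.mpr
      constructor
      · exact div_nonneg hT0 hpd.le
      · exact (div_lt_one hpd).mpr hTd
    rw [key2, Int.floor_intCast_add, hfr, add_zero, hz]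

lemma rho_mem (l : ℕ) (π : Equiv.Perm (Fin m)) (x : ℝ) (hx : x ∈ Set.Ico (0:ℝ) 1) :
    rho m l π x ∈ Set.Ico (0:ℝ) 1 := by
  have h := floor_rho l π x hx 0
  simp only [pow_zero, one_mul] at h
  have hA0 : A m l π x 0 = 0 := by simp [A]
  have hx0 : ⌊x⌋ = 0 := Int.floor_eq_zero_iff.mpr hx
  rw [hA0, hx0] at h
  exact Int.floor_eq_zero_iff.mp (by simpa using h)

lemma C_rho (l : ℕ) (π : Equiv.Perm (Fin m)) (x : ℝ) (hx : x ∈ Set.Ico (0:ℝ) 1) (i : ℕ) :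
    C m (rho m l π x) i = (⌊x * (m:ℝ)^(i+1)⌋ + A m l π x (i+1)) % m := by
  have hr := rho_mem l π x hx
  rw [C_eq_mod _ hr.1]
  have h1 : rho m l π x * (m:ℝ)^(i+1) = (m:ℝ)^(i+1) * rho m l π x := mul_comm _ _
  have h2 : (m:ℝ)^(i+1) * x = x * (m:ℝ)^(i+1) := mul_comm _ _
  rw [h1, floor_rho l π x hx (i+1), h2]

lemma C_rho_lt (l : ℕ) (π : Equiv.Perm (Fin m)) (x : ℝ) (hx : x ∈ Set.Ico (0:ℝ) 1)
    (i : ℕ) (hi : i < l) : C m (rho m l π x) i = P m π x i := by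
  have hA : A m l π x (i+1)
      = (∑ j ∈ Finset.range i, (P m π x j - C m x j) * (m:ℤ)^(i-j))
        + (P m π x i - C m x i) := by
    rw [A, min_eq_left (by omega), Finset.sum_range_succ]
    simp only [Nat.add_sub_cancel, Nat.sub_self, pow_zero, mul_one]
  have hdvd : (m:ℤ) ∣ ∑ j ∈ Finset.range i, (P m π x j - C m x j) * (m:ℤ)^(i-j) := by
    refine Finset.dvd_sum fun j hj => ?_
    have hj' : j < i := Finset.mem_range.mp hj
    exact dvd_mul_of_dvd_right (dvd_pow_self (m:ℤ) (by omega : i - j ≠ 0)) _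
  obtain ⟨t, ht⟩ := hdvd
  rw [C_rho l π x hx i, hA, ht]
  have hF : ⌊x * (m:ℝ)^(i+1)⌋ % m = C m x i % m := by
    rw [← C_eq_mod x hx.1 i, Int.emod_eq_of_lt (C_nonneg x i) (C_lt x i)]
  have h1 : ⌊x * (m:ℝ)^(i+1)⌋ + ((m:ℤ) * t + (P m π x i - C m x i))
      = (⌊x * (m:ℝ)^(i+1)⌋ + (P m π x i - C m x i)) + t * (m:ℤ) := by ring
  rw [h1, Int.add_mul_emod_self_right]
  have h2 : (⌊x * (m:ℝ)^(i+1)⌋ + (P m π x i - C m x i)) % m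
      = (C m x i + (P m π x i - C m x i)) % m :=
    Int.ModEq.add_right _ hF
  rw [h2]
  have h3 : C m x i + (P m π x i - C m x i) = P m π x i := by ring
  rw [h3]
  exact Int.emod_eq_of_lt (P_nonneg π x i) (P_lt π x i)

lemma C_rho_ge (l : ℕ) (π : Equiv.Perm (Fin m)) (x : ℝ) (hx : x ∈ Set.Ico (0:ℝ) 1)
    (i : ℕ) (hi : l ≤ i) : C m (rho m l π x) i = C m x i := by
  have hA : A m l π x (i+1)
      = ∑ j ∈ Finset.range l, (P m π x j - C m x j) * (m:ℤ)^(i-j) := by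
    rw [A, min_eq_right (by omega)]
    simp only [Nat.add_sub_cancel]
  have hdvd : (m:ℤ) ∣ ∑ j ∈ Finset.range l, (P m π x j - C m x j) * (m:ℤ)^(i-j) := by
    refine Finset.dvd_sum fun j hj => ?_
    have hj' : j < l := Finset.mem_range.mp hj
    exact dvd_mul_of_dvd_right (dvd_pow_self (m:ℤ) (by omega : i - j ≠ 0)) _
  obtain ⟨t, ht⟩ := hdvd
  rw [C_rho l π x hx i, hA, ht]
  have h1 : ⌊x * (m:ℝ)^(i+1)⌋ + (m:ℤ) * t = ⌊x * (m:ℝ)^(i+1)⌋ + t * (m:ℤ) := by ring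
  rw [h1, Int.add_mul_emod_self_right, ← C_eq_mod x hx.1 i]

end Stmt11

theorem stmt11 (m : ℕ) [NeZero m] (hm : 2 ≤ m) (l : ℕ) (π : Equiv.Perm (Fin m))
    (x : ℝ) (hx : x ∈ Set.Ico (0 : ℝ) 1) :
    rho m l π x ∈ Set.Ico (0 : ℝ) 1 ∧
    (∀ i < l, digit m (rho m l π x) i = π (digit m x i)) ∧
    (∀ i, l ≤ i → digit m (rho m l π x) i = digit m x i) := by
  refine ⟨Stmt11.rho_mem l π x hx, fun i hi => ?_, fun i hi => ?_⟩
  · have h := Stmt11.C_rho_lt l π x hx i hi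
    have h2 : ((digit m (rho m l π x) i : ℕ) : ℤ) = ((π (digit m x i) : ℕ) : ℤ) := h
    exact Fin.ext (by exact_mod_cast h2)
  · have h := Stmt11.C_rho_ge l π x hx i hi
    have h2 : ((digit m (rho m l π x) i : ℕ) : ℤ) = ((digit m x i : ℕ) : ℤ) := h
    exact Fin.ext (by exact_mod_cast h2)
end

section
/- Let m ≥ 2 and l : ℕ. For all permutations σ, π of Fin m and all x ∈ [0,1), the cell-permutation maps at depth l satisfy ρ_σ(ρ_π(x)) = ρ_{σ∘π}(x), and ρ_{id}(x) = x. Hence π ↦ ρ_π defines an action of the symmetric group of Fin m on [0,1), so that the symmetric group is a symmetry group of the encoded dynamics. -/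
lemma geomAux (m : ℕ) (hm : 1 ≤ m) (n : ℕ) :
    ∑ k ∈ Finset.range n, ((m : ℝ) - 1) * ((m : ℝ) ^ (k + 1))⁻¹ = 1 - ((m : ℝ) ^ n)⁻¹ := by
  have hm0 : (m : ℝ) ≠ 0 := Nat.cast_ne_zero.mpr (by omega)
  induction n with
  | zero => simp
  | succ n ih =>
    rw [Finset.sum_range_succ, ih]
    have h1 : (m : ℝ) ^ (n + 1) ≠ 0 := pow_ne_zero _ hm0
    have h2 : (m : ℝ) ^ n ≠ 0 := pow_ne_zero _ hm0
    field_simp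
    ring

/-- digits of an explicit expansion -/
lemma digit_of_expansion (m : ℕ) [NeZero m] (hm : 2 ≤ m) (l : ℕ) (d : ℕ → Fin m) (r : ℝ)
    (hr0 : 0 ≤ r) (hr1 : r < ((m : ℝ) ^ l)⁻¹) {j : ℕ} (hj : j < l) :
    digit m (∑ i ∈ Finset.range l, ((d i : ℕ) : ℝ) * ((m : ℝ) ^ (i + 1))⁻¹ + r) j = d j := by
  obtain ⟨n, rfl⟩ : ∃ n, l = (j + 1) + n := ⟨l - (j + 1), by omega⟩
  have hm0 : (m : ℝ) ≠ 0 := by positivity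
  have hmpos : (0 : ℝ) < m := by positivity
  set x : ℝ := ∑ i ∈ Finset.range ((j+1)+n), ((d i : ℕ) : ℝ) * ((m : ℝ) ^ (i + 1))⁻¹ + r with hxdef
  set A : ℕ := ∑ i ∈ Finset.range (j + 1), (d i : ℕ) * m ^ (j - i) with hAdef
  -- split the sum
  have hsplit : ∑ i ∈ Finset.range ((j+1)+n), ((d i : ℕ) : ℝ) * ((m : ℝ) ^ (i + 1))⁻¹
      = ∑ i ∈ Finset.range (j+1), ((d i : ℕ) : ℝ) * ((m : ℝ) ^ (i + 1))⁻¹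
        + ∑ k ∈ Finset.range n, ((d ((j+1)+k) : ℕ) : ℝ) * ((m : ℝ) ^ ((j+1)+k + 1))⁻¹ := by
    rw [Finset.sum_range_add]
  have hhead : (∑ i ∈ Finset.range (j+1), ((d i : ℕ) : ℝ) * ((m : ℝ) ^ (i + 1))⁻¹) * (m:ℝ)^(j+1)
      = (A : ℝ) := by
    rw [hAdef]
    push_cast
    rw [Finset.sum_mul]
    refine Finset.sum_congr rfl fun i hi => ?_
    have hij : i ≤ j := by simpa [Nat.lt_succ_iff] using hi
    have : j + 1 = (i + 1) + (j - i) := by omega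
    rw [this, pow_add]
    field_simp
    ring
  set t : ℝ := (∑ k ∈ Finset.range n, ((d ((j+1)+k) : ℕ) : ℝ) * ((m : ℝ) ^ ((j+1)+k + 1))⁻¹ + r)
      * (m:ℝ)^(j+1) with htdef
  have ht0 : 0 ≤ t := by
    apply mul_nonneg _ (by positivity)
    apply add_nonneg _ hr0
    apply Finset.sum_nonneg
    intro i _
    positivity
  have ht1 : t < 1 := by
    have hterm : ∀ k ∈ Finset.range n,
        ((d ((j+1)+k) : ℕ) : ℝ) * ((m : ℝ) ^ ((j+1)+k + 1))⁻¹ * (m:ℝ)^(j+1)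
        ≤ ((m:ℝ) - 1) * ((m : ℝ) ^ (k + 1))⁻¹ := by
      intro k _
      have hpe : (j+1)+k+1 = (j+1) + (k+1) := by omega
      rw [hpe, pow_add, mul_inv]
      have hdle : ((d ((j+1)+k) : ℕ) : ℝ) ≤ (m : ℝ) - 1 := by
        have := (d ((j+1)+k)).isLt
        have : (d ((j+1)+k) : ℕ) + 1 ≤ m := this
        have := (Nat.cast_le (α := ℝ)).mpr this
        push_cast at this
        linarith
      calc ((d ((j+1)+k) : ℕ) : ℝ) * (((m:ℝ)^(j+1))⁻¹ * ((m:ℝ)^(k+1))⁻¹) * (m:ℝ)^(j+1)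
          = ((d ((j+1)+k) : ℕ) : ℝ) * ((m:ℝ)^(k+1))⁻¹ := by field_simp
        _ ≤ ((m:ℝ) - 1) * ((m:ℝ)^(k+1))⁻¹ := by
            apply mul_le_mul_of_nonneg_right hdle (by positivity)
    have hsum : (∑ k ∈ Finset.range n, ((d ((j+1)+k) : ℕ) : ℝ) * ((m : ℝ) ^ ((j+1)+k + 1))⁻¹)
        * (m:ℝ)^(j+1) ≤ 1 - ((m:ℝ)^n)⁻¹ := by
      rw [Finset.sum_mul, ← geomAux m (by omega) n]
      exact Finset.sum_le_sum hterm
    have hrsmall : r * (m:ℝ)^(j+1) < ((m:ℝ)^n)⁻¹ := by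
      have : r * (m:ℝ)^(j+1) < ((m:ℝ)^((j+1)+n))⁻¹ * (m:ℝ)^(j+1) := by
        apply mul_lt_mul_of_pos_right hr1 (by positivity)
      calc r * (m:ℝ)^(j+1) < ((m:ℝ)^((j+1)+n))⁻¹ * (m:ℝ)^(j+1) := this
        _ = ((m:ℝ)^n)⁻¹ := by rw [pow_add, mul_inv]; field_simp
    rw [htdef, add_mul]
    linarith
  have hx : x * (m:ℝ)^(j+1) = (A : ℝ) + t := by
    rw [hxdef, hsplit, htdef]
    rw [add_mul, add_mul, hhead]
    ring
  have hfloor : ⌊x * (m:ℝ)^(j+1)⌋ = (A : ℤ) := by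
    rw [hx]
    have : ((A : ℤ) : ℝ) = (A : ℝ) := by push_cast; ring
    rw [← this, Int.floor_intCast_add]
    have : ⌊t⌋ = 0 := Int.floor_eq_zero_iff.mpr ⟨ht0, ht1⟩
    omega
  have hAm : A % m = (d j : ℕ) := by
    rw [hAdef, Finset.sum_range_succ]
    have : ∀ i ∈ Finset.range j, (d i : ℕ) * m ^ (j - i) = m * ((d i : ℕ) * m ^ (j - i - 1)) := by
      intro i hi
      have hij : i < j := Finset.mem_range.mp hi
      obtain ⟨e, he⟩ : ∃ e, j - i = e + 1 := ⟨j - i - 1, by omega⟩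
      rw [he, pow_succ, Nat.add_sub_cancel]
      ring
    rw [Finset.sum_congr rfl this, ← Finset.mul_sum, Nat.sub_self, pow_zero, mul_one]
    rw [Nat.mul_add_mod]
    exact Nat.mod_eq_of_lt (d j).isLt
  apply Fin.ext
  show (⌊x * (m:ℝ)^(j+1)⌋).toNat % m = (d j : ℕ)
  rw [hfloor, Int.toNat_natCast, hAm]

/-- remainder bound for the digit expansion of x ∈ [0,1) -/
lemma remainder_bound (m : ℕ) [NeZero m] (hm : 2 ≤ m) (x : ℝ) (hx : x ∈ Set.Ico (0:ℝ) 1) (l : ℕ) :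
    0 ≤ x - ∑ i ∈ Finset.range l, ((digit m x i : ℕ) : ℝ) * ((m : ℝ) ^ (i + 1))⁻¹ ∧
    x - ∑ i ∈ Finset.range l, ((digit m x i : ℕ) : ℝ) * ((m : ℝ) ^ (i + 1))⁻¹ < ((m : ℝ) ^ l)⁻¹ := by
  have hm0 : (m : ℝ) ≠ 0 := by positivity
  have hmpos : (0 : ℝ) < m := by positivity
  induction l with
  | zero => simpa using hx
  | succ l ih =>
    obtain ⟨h0, h1⟩ := ih
    set S : ℝ := ∑ i ∈ Finset.range l, ((digit m x i : ℕ) : ℝ) * ((m : ℝ) ^ (i + 1))⁻¹ with hS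
    set r : ℝ := x - S with hrdef
    set SZ : ℤ := ∑ i ∈ Finset.range l, ((digit m x i : ℕ) : ℤ) * (m : ℤ) ^ (l - i) with hSZ
    have hSm : S * (m:ℝ)^(l+1) = ((SZ : ℤ) : ℝ) := by
      rw [hS, hSZ]
      push_cast
      rw [Finset.sum_mul]
      refine Finset.sum_congr rfl fun i hi => ?_
      have hil : i < l := Finset.mem_range.mp hi
      have : l + 1 = (i + 1) + (l - i) := by omega
      rw [this, pow_add]
      field_simp
      ring
    have hdvd : (m : ℤ) ∣ SZ := by
      apply Finset.dvd_sum
      intro i hi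
      have hil : i < l := Finset.mem_range.mp hi
      exact Dvd.dvd.mul_left (dvd_pow_self (m:ℤ) (by omega)) _
    set k : ℤ := ⌊r * (m:ℝ)^(l+1)⌋ with hk
    have hrk0 : (0:ℝ) ≤ r * (m:ℝ)^(l+1) := mul_nonneg h0 (by positivity)
    have hrk1 : r * (m:ℝ)^(l+1) < (m : ℝ) := by
      have : r * (m:ℝ)^(l+1) < ((m:ℝ)^l)⁻¹ * (m:ℝ)^(l+1) :=
        mul_lt_mul_of_pos_right h1 (by positivity)
      calc r * (m:ℝ)^(l+1) < ((m:ℝ)^l)⁻¹ * (m:ℝ)^(l+1) := this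
        _ = (m : ℝ) := by rw [pow_succ]; field_simp
    have hk0 : 0 ≤ k := Int.floor_nonneg.mpr hrk0
    have hk1 : k < (m : ℤ) := by
      rw [hk]
      apply Int.floor_lt.mpr
      exact_mod_cast hrk1
    have hfx : ⌊x * (m:ℝ)^(l+1)⌋ = SZ + k := by
      have hxr : x = S + r := by rw [hrdef]; ring
      rw [hxr, add_mul, hSm, Int.floor_intCast_add]
    have hc : ((digit m x l : ℕ) : ℤ) = k := by
      have hdig : (digit m x l : ℕ) = (⌊x * (m:ℝ)^(l+1)⌋).toNat % m := rfl
      have hfnn : 0 ≤ ⌊x * (m:ℝ)^(l+1)⌋ := by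
        apply Int.floor_nonneg.mpr
        exact mul_nonneg hx.1 (by positivity)
      obtain ⟨C, hC⟩ := hdvd
      have : ((digit m x l : ℕ) : ℤ) = ⌊x * (m:ℝ)^(l+1)⌋ % (m : ℤ) := by
        rw [hdig]
        push_cast
        rw [Int.toNat_of_nonneg hfnn]
      rw [this, hfx, hC, add_comm, Int.add_mul_emod_self_left]
      exact Int.emod_eq_of_lt hk0 hk1
    have hcast : ((digit m x l : ℕ) : ℝ) = (k : ℝ) := by exact_mod_cast hc
    have hkle : (k : ℝ) ≤ r * (m:ℝ)^(l+1) := Int.floor_le _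
    have hklt : r * (m:ℝ)^(l+1) < (k : ℝ) + 1 := Int.lt_floor_add_one _
    rw [Finset.sum_range_succ, ← hS]
    have hgoal : x - (S + ((digit m x l : ℕ) : ℝ) * ((m:ℝ)^(l+1))⁻¹)
        = r - (k : ℝ) * ((m:ℝ)^(l+1))⁻¹ := by
      rw [hcast, hrdef]; ring
    rw [hgoal]
    have hP : (0:ℝ) < (m:ℝ)^(l+1) := by positivity
    have hinv : ((m:ℝ)^(l+1))⁻¹ * (m:ℝ)^(l+1) = 1 := inv_mul_cancel₀ (ne_of_gt hP)
    have hinvpos : (0:ℝ) < ((m:ℝ)^(l+1))⁻¹ := by positivity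
    constructor
    · have h := mul_le_mul_of_nonneg_right hkle hinvpos.le
      rw [mul_assoc, mul_inv_cancel₀ (ne_of_gt hP), mul_one] at h
      linarith
    · have h := mul_lt_mul_of_pos_right hklt hinvpos
      rw [mul_assoc, mul_inv_cancel₀ (ne_of_gt hP), mul_one, add_mul, one_mul] at h
      linarith

theorem stmt12 (m : ℕ) [NeZero m] (hm : 2 ≤ m) (l : ℕ) :
    (∀ σ π : Equiv.Perm (Fin m), ∀ x ∈ Set.Ico (0 : ℝ) 1,
      rho m l σ (rho m l π x) = rho m l (σ * π) x) ∧
    (∀ x ∈ Set.Ico (0 : ℝ) 1, rho m l 1 x = x) := by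
  constructor
  · intro σ π x hx
    obtain ⟨hr0, hr1⟩ := remainder_bound m hm x hx l
    have rho_eq : ∀ (τ : Equiv.Perm (Fin m)) (y : ℝ), rho m l τ y
        = ∑ i ∈ Finset.range l, ((τ (digit m y i) : ℕ) : ℝ) * ((m:ℝ)^(i+1))⁻¹
          + (y - ∑ i ∈ Finset.range l, ((digit m y i : ℕ) : ℝ) * ((m:ℝ)^(i+1))⁻¹) := by
      intro τ y
      rw [rho]
      simp only [sub_mul, Finset.sum_sub_distrib]
      ring
    have hd : ∀ j, j < l → digit m (rho m l π x) j = π (digit m x j) := by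
      intro j hj
      rw [rho_eq π x]
      exact digit_of_expansion m hm l (fun i => π (digit m x i)) _ hr0 hr1 hj
    have hs1 : ∑ i ∈ Finset.range l, ((σ (digit m (rho m l π x) i) : ℕ) : ℝ) * ((m:ℝ)^(i+1))⁻¹
        = ∑ i ∈ Finset.range l, ((σ (π (digit m x i)) : ℕ) : ℝ) * ((m:ℝ)^(i+1))⁻¹ :=
      Finset.sum_congr rfl fun i hi => by rw [hd i (Finset.mem_range.mp hi)]
    have hs2 : ∑ i ∈ Finset.range l, ((digit m (rho m l π x) i : ℕ) : ℝ) * ((m:ℝ)^(i+1))⁻¹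
        = ∑ i ∈ Finset.range l, ((π (digit m x i) : ℕ) : ℝ) * ((m:ℝ)^(i+1))⁻¹ :=
      Finset.sum_congr rfl fun i hi => by rw [hd i (Finset.mem_range.mp hi)]
    rw [rho_eq σ (rho m l π x), rho_eq (σ * π) x, hs1, hs2, rho_eq π x]
    simp only [Equiv.Perm.mul_apply]
    ring
  · intro x hx
    simp [rho]
end

section
/- Let m ≥ 2, l : ℕ, and π a permutation of Fin m. Then the cell-permutation map ρ_π at depth l is a bijection of [0,1) onto itself, with inverse the cell-permutation map ρ_{π⁻¹} at depth l. -/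
-- expansion: digits of N reconstruct N % m^l
lemma expand_aux (m N l : ℕ) :
    ∑ j ∈ Finset.range l, (N / m ^ j % m) * m ^ j = N % m ^ l := by
  induction l with
  | zero => simp [Nat.mod_one]
  | succ l ih =>
    rw [Finset.sum_range_succ, ih, pow_succ]
    have h1 : N % (m ^ l * m) / m ^ l = N / m ^ l % m := Nat.mod_mul_right_div_self ..
    have h2 : N % (m ^ l * m) % m ^ l = N % m ^ l := Nat.mod_mod_of_dvd _ ⟨m, rfl⟩
    have h3 := Nat.div_add_mod (N % (m ^ l * m)) (m ^ l)
    rw [h1, h2] at h3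
    have h4 : N / m ^ l % m * m ^ l = m ^ l * (N / m ^ l % m) := Nat.mul_comm ..
    omega

lemma bound_aux (m : ℕ) (a : ℕ → ℕ) (ha : ∀ j, a j < m) (n : ℕ) :
    (∑ j ∈ Finset.range n, a j * m ^ (n - 1 - j)) + 1 ≤ m ^ n := by
  induction n with
  | zero => simp
  | succ n ih =>
    rw [Finset.sum_range_succ]
    have e1 : ∀ j ∈ Finset.range n, a j * m ^ (n + 1 - 1 - j) = (a j * m ^ (n - 1 - j)) * m := by
      intro j hj
      rw [Finset.mem_range] at hj
      rw [mul_assoc, ← pow_succ]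
      congr 2
      omega
    rw [Finset.sum_congr rfl e1, ← Finset.sum_mul]
    have h2 : a n * m ^ (n + 1 - 1 - n) = a n := by simp
    have h3 : a n < m := ha n
    have h4 : ((∑ j ∈ Finset.range n, a j * m ^ (n - 1 - j)) + 1) * m ≤ m ^ n * m :=
      Nat.mul_le_mul_right _ ih
    have h7 : m ^ n * m = m ^ (n+1) := (pow_succ m n).symm
    have h8 : ((∑ j ∈ Finset.range n, a j * m ^ (n - 1 - j)) + 1) * m
        = (∑ j ∈ Finset.range n, a j * m ^ (n - 1 - j)) * m + m := by ring
    rw [h2]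
    omega

lemma extract_aux (m : ℕ) (hm : 0 < m) (l : ℕ) (a : ℕ → ℕ) (ha : ∀ j, a j < m)
    (i : ℕ) (hi : i < l) :
    (∑ j ∈ Finset.range l, a j * m ^ (l - 1 - j)) / m ^ (l - 1 - i) % m = a i := by
  set k := l - 1 - i with hk
  -- split the sum
  have hsplit : ∑ j ∈ Finset.range l, a j * m ^ (l - 1 - j)
      = (∑ j ∈ Finset.range i, a j * m ^ (l - 1 - j)) + a i * m ^ k
        + ∑ j ∈ Finset.Ico (i+1) l, a j * m ^ (l - 1 - j) := by
    rw [Finset.range_eq_Ico, ← Finset.sum_Ico_consecutive _ (Nat.zero_le (i+1)) hi,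
      ← Finset.range_eq_Ico, Finset.sum_range_succ]
  -- low part divisible by m^k * m
  have hlow : ∑ j ∈ Finset.range i, a j * m ^ (l - 1 - j)
      = m ^ k * (m * ∑ j ∈ Finset.range i, a j * m ^ (i - 1 - j)) := by
    rw [Finset.mul_sum, Finset.mul_sum]
    refine Finset.sum_congr rfl fun j hj => ?_
    rw [Finset.mem_range] at hj
    have : l - 1 - j = k + 1 + (i - 1 - j) := by omega
    rw [this, pow_add, pow_add, pow_one]
    ring
  -- tail part < m^k
  have htail : ∑ j ∈ Finset.Ico (i+1) l, a j * m ^ (l - 1 - j) < m ^ k := by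
    have hre : ∑ j ∈ Finset.Ico (i+1) l, a j * m ^ (l - 1 - j)
        = ∑ t ∈ Finset.range k, a (i+1+t) * m ^ (k - 1 - t) := by
      rw [Finset.sum_Ico_eq_sum_range]
      have hk' : l - (i+1) = k := by omega
      rw [hk']
      refine Finset.sum_congr rfl fun t ht => ?_
      rw [Finset.mem_range] at ht
      congr 2
      omega
    have := bound_aux m (fun t => a (i+1+t)) (fun t => ha _) k
    rw [hre]
    omega
  rw [hsplit, hlow]
  set T := ∑ j ∈ Finset.Ico (i+1) l, a j * m ^ (l - 1 - j)
  set S := ∑ j ∈ Finset.range i, a j * m ^ (i - 1 - j)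
  have hrearr : m ^ k * (m * S) + a i * m ^ k + T = T + m ^ k * (a i + m * S) := by ring
  rw [hrearr, Nat.add_mul_div_left _ _ (Nat.pow_pos (n := k) hm),
    Nat.div_eq_of_lt htail, zero_add, Nat.add_mul_mod_self_left, Nat.mod_eq_of_lt (ha i)]

lemma digit_coe (m : ℕ) [NeZero m] (x : ℝ) (i : ℕ) :
    (digit m x i : ℕ) = ⌊x * (m : ℝ) ^ (i + 1)⌋₊ % m := by
  simp [digit, Int.floor_toNat]

lemma floor_shift (m : ℕ) (hm : 0 < m) (x : ℝ) {i l : ℕ} (hi : i < l) :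
    ⌊x * (m : ℝ) ^ (i + 1)⌋₊ = ⌊x * (m : ℝ) ^ l⌋₊ / m ^ (l - 1 - i) := by
  have hmR : (0:ℝ) < m := by exact_mod_cast hm
  have key : x * (m:ℝ) ^ (i+1) = (x * (m:ℝ) ^ l) / ((m ^ (l - 1 - i) : ℕ) : ℝ) := by
    push_cast
    rw [eq_div_iff (by positivity), mul_assoc, ← pow_add]
    congr 2
    omega
  rw [key, Nat.floor_div_natCast]

lemma rho_key (m : ℕ) [NeZero m] (l : ℕ) (π : Equiv.Perm (Fin m))
    {x : ℝ} (hx : x ∈ Set.Ico (0:ℝ) 1) :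
    rho m l π x ∈ Set.Ico (0:ℝ) 1 ∧
    ∀ i < l, digit m (rho m l π x) i = π (digit m x i) := by
  obtain ⟨hx0, hx1⟩ := hx
  have hm0 : 0 < m := Nat.pos_of_ne_zero (NeZero.ne m)
  have hmR : (0:ℝ) < m := by exact_mod_cast hm0
  have hml : (0:ℝ) < (m:ℝ) ^ l := by positivity
  set y : ℝ := x * (m:ℝ) ^ l with hy
  have hy0 : 0 ≤ y := by positivity
  set N : ℕ := ⌊y⌋₊ with hNdef
  set t : ℝ := Int.fract y with htdef
  have ht0 : 0 ≤ t := Int.fract_nonneg y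
  have ht1 : t < 1 := Int.fract_lt_one y
  have hxl : y = (N : ℝ) + t := by
    have h1 : ((N : ℤ) : ℝ) = (⌊y⌋ : ℝ) := by
      rw [hNdef, ← Int.floor_toNat, Int.toNat_of_nonneg (Int.floor_nonneg.2 hy0)]
    have := Int.floor_add_fract y
    push_cast at h1 ⊢
    linarith
  have hN : N < m ^ l := by
    rw [hNdef, Nat.floor_lt hy0]
    push_cast
    calc y < 1 * (m:ℝ)^l := by rw [hy]; exact mul_lt_mul_of_pos_right hx1 hml
    _ = (m:ℝ)^l := one_mul _
  -- digit formula for x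
  have hd : ∀ i < l, (digit m x i : ℕ) = N / m ^ (l - 1 - i) % m := by
    intro i hi
    rw [digit_coe, floor_shift m hm0 x hi]
  set N' : ℕ := ∑ i ∈ Finset.range l, (π (digit m x i) : ℕ) * m ^ (l - 1 - i) with hN'def
  have hN' : N' + 1 ≤ m ^ l :=
    bound_aux m (fun i => (π (digit m x i) : ℕ)) (fun i => (π (digit m x i)).isLt) l
  have hNsum : ∑ i ∈ Finset.range l, (digit m x i : ℕ) * m ^ (l - 1 - i) = N := by
    rw [Finset.sum_congr rfl fun i hi => by
      rw [hd i (Finset.mem_range.mp hi)]]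
    have := Finset.sum_range_reflect (fun j => N / m ^ j % m * m ^ j) l
    rw [this, expand_aux, Nat.mod_eq_of_lt hN]
  -- key identity
  have hrho : rho m l π x * (m:ℝ) ^ l = (N' : ℝ) + t := by
    have e1 : ∀ i ∈ Finset.range l,
        ((((π (digit m x i) : ℕ) : ℝ) - ((digit m x i : ℕ) : ℝ)) * ((m:ℝ)^(i+1))⁻¹) * (m:ℝ)^l
        = ((π (digit m x i) : ℕ) : ℝ) * (m:ℝ)^(l - 1 - i)
          - ((digit m x i : ℕ) : ℝ) * (m:ℝ)^(l - 1 - i) := by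
      intro i hi
      rw [Finset.mem_range] at hi
      have hp : (m:ℝ)^l = (m:ℝ)^(i+1) * (m:ℝ)^(l - 1 - i) := by
        rw [← pow_add]; congr 1; omega
      have hne : ((m:ℝ)^(i+1)) ≠ 0 := by positivity
      field_simp [hp]
      rw [hp]
      ring
    rw [rho, add_mul, Finset.sum_mul, Finset.sum_congr rfl e1, Finset.sum_sub_distrib]
    have e2 : ∑ i ∈ Finset.range l, ((digit m x i : ℕ):ℝ) * (m:ℝ)^(l - 1 - i) = (N : ℝ) := by
      rw [← hNsum]
      push_cast
      rfl
    have e3 : ∑ i ∈ Finset.range l, ((π (digit m x i):ℕ):ℝ) * (m:ℝ)^(l - 1 - i) = (N' : ℝ) := by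
      rw [hN'def]
      push_cast
      rfl
    rw [e2, e3, ← hy, hxl]
    ring
  have hreq : rho m l π x = ((N' : ℝ) + t) / (m:ℝ)^l := by
    field_simp [hrho]
    exact hrho
  have hN'R : (N' : ℝ) + 1 ≤ (m:ℝ)^l := by exact_mod_cast hN'
  have hmem : rho m l π x ∈ Set.Ico (0:ℝ) 1 := by
    rw [hreq]
    constructor
    · positivity
    · rw [div_lt_one hml]
      linarith
  refine ⟨hmem, fun i hi => ?_⟩
  have hfloor : ⌊rho m l π x * (m:ℝ)^l⌋₊ = N' := by
    rw [hrho, add_comm, Nat.floor_add_natCast ht0, Nat.floor_eq_zero.2 ht1, zero_add]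
  apply Fin.ext
  show (digit m (rho m l π x) i : ℕ) = (π (digit m x i) : ℕ)
  rw [digit_coe, floor_shift m hm0 _ hi, hfloor, hN'def]
  exact extract_aux m hm0 l (fun j => (π (digit m x j) : ℕ))
    (fun j => (π (digit m x j)).isLt) i hi

lemma rho_inv (m : ℕ) [NeZero m] (l : ℕ) (π : Equiv.Perm (Fin m))
    {x : ℝ} (hx : x ∈ Set.Ico (0:ℝ) 1) :
    rho m l π⁻¹ (rho m l π x) = x := by
  obtain ⟨-, hdig⟩ := rho_key m l π hx
  have e : ∀ i ∈ Finset.range l,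
      (((π⁻¹ (digit m (rho m l π x) i) : ℕ) : ℝ)
        - ((digit m (rho m l π x) i : ℕ) : ℝ)) * ((m:ℝ)^(i+1))⁻¹
      = (((digit m x i : ℕ) : ℝ) - ((π (digit m x i) : ℕ) : ℝ)) * ((m:ℝ)^(i+1))⁻¹ := by
    intro i hi
    rw [Finset.mem_range] at hi
    rw [hdig i hi, ← Equiv.Perm.mul_apply, inv_mul_cancel, Equiv.Perm.one_apply]
  calc rho m l π⁻¹ (rho m l π x)
      = rho m l π x + ∑ i ∈ Finset.range l,
          (((digit m x i : ℕ) : ℝ) - ((π (digit m x i) : ℕ) : ℝ)) * ((m:ℝ)^(i+1))⁻¹ := by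
        rw [rho, Finset.sum_congr rfl e]
    _ = x := by
        rw [rho, add_assoc, ← Finset.sum_add_distrib]
        rw [Finset.sum_eq_zero fun i _ => by ring, add_zero]

theorem stmt13 (m : ℕ) [NeZero m] (hm : 2 ≤ m) (l : ℕ) (π : Equiv.Perm (Fin m)) :
    Set.BijOn (rho m l π) (Set.Ico (0 : ℝ) 1) (Set.Ico (0 : ℝ) 1) ∧
    (∀ x ∈ Set.Ico (0 : ℝ) 1, rho m l π⁻¹ (rho m l π x) = x) ∧
    (∀ x ∈ Set.Ico (0 : ℝ) 1, rho m l π (rho m l π⁻¹ x) = x) := by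
  have hright : ∀ x ∈ Set.Ico (0 : ℝ) 1, rho m l π (rho m l π⁻¹ x) = x := by
    intro x hx
    have := rho_inv m l π⁻¹ hx
    rwa [inv_inv] at this
  refine ⟨⟨fun x hx => (rho_key m l π hx).1, ?_, ?_⟩,
    fun x hx => rho_inv m l π hx, hright⟩
  · intro a ha b hb hab
    have h1 := rho_inv m l π ha
    have h2 := rho_inv m l π hb
    rw [← h1, ← h2, hab]
  · intro y hy
    exact ⟨rho m l π⁻¹ y, (rho_key m l π⁻¹ hy).1, hright y hy⟩
end

section
/- Let m ≥ 2, l : ℕ, π a permutation of Fin m, and k < m^l. Then the cell-permutation map ρ_π at depth l acts as a rigid translation on the cell E^k = [k/m^l, (k+1)/m^l): for all x, y ∈ E^k one has ρ_π(x) − x = ρ_π(y) − y; moreover, ρ_π maps E^k bijectively onto the cell E^{k'} = [k'/m^l, (k'+1)/m^l), where k' = ∑_{i<l} (π(d_i)) · m^{l-1-i} and d_0, …, d_{l-1} ∈ Fin m are the base-m digits of k, i.e. k = ∑_{i<l} (d_i) · m^{l-1-i}. -/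
lemma stmt14_tail_lt (m : ℕ) (hm : 1 ≤ m) (d : ℕ → Fin m) :
    ∀ l i, ∑ j ∈ Finset.Ico (i+1) l, (d j : ℕ) * m ^ (l-1-j) < m ^ (l-1-i) := by
  intro l
  induction l with
  | zero => intro i; simpa using (Nat.pow_pos hm : 0 < m ^ (0-1-i))
  | succ l ih =>
    intro i
    rcases le_or_gt (l+1) (i+1) with h | h
    · rw [Finset.Ico_eq_empty (by omega)]
      simpa using (Nat.pow_pos hm : 0 < m ^ (l+1-1-i))
    · -- i + 1 ≤ l
      rw [Finset.sum_Ico_succ_top (by omega)]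
      have hre : ∑ j ∈ Finset.Ico (i+1) l, (d j : ℕ) * m ^ (l+1-1-j)
          = m * ∑ j ∈ Finset.Ico (i+1) l, (d j : ℕ) * m ^ (l-1-j) := by
        rw [Finset.mul_sum]
        refine Finset.sum_congr rfl fun j hj => ?_
        simp only [Finset.mem_Ico] at hj
        have : l + 1 - 1 - j = (l - 1 - j) + 1 := by omega
        rw [this, pow_succ]
        ring
      rw [hre]
      have h1 : ∑ j ∈ Finset.Ico (i+1) l, (d j : ℕ) * m ^ (l-1-j) ≤ m ^ (l-1-i) - 1 :=
        Nat.le_sub_one_of_lt (ih i)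
      have h2 : (d l : ℕ) ≤ m - 1 := Nat.le_sub_one_of_lt (d l).isLt
      have h3 : l + 1 - 1 - i = (l - 1 - i) + 1 := by omega
      have h4 : 1 ≤ m ^ (l-1-i) := Nat.one_le_pow _ _ hm
      have h0 : l + 1 - 1 - l = 0 := by omega
      have hmA : m ≤ m * m ^ (l-1-i) := Nat.le_mul_of_pos_right _ h4
      calc m * ∑ j ∈ Finset.Ico (i+1) l, (d j : ℕ) * m ^ (l-1-j) + (d l : ℕ) * m ^ (l+1-1-l)
          ≤ m * (m ^ (l-1-i) - 1) + (m - 1) := by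
            rw [h0, pow_zero, mul_one]
            exact Nat.add_le_add (Nat.mul_le_mul_left _ h1) h2
        _ = m * m ^ (l-1-i) - m + (m - 1) := by rw [Nat.mul_sub, mul_one]
        _ < m ^ ((l-1-i)+1) := by
            have hp : m ^ ((l-1-i)+1) = m * m ^ (l-1-i) := by rw [pow_succ]; ring
            rw [hp]; omega
        _ = m ^ (l+1-1-i) := by rw [h3]

lemma stmt14_extract (m l : ℕ) (hm : 1 ≤ m) (d : ℕ → Fin m) (i : ℕ) (hi : i < l) :
    (∑ j ∈ Finset.range l, (d j : ℕ) * m ^ (l-1-j)) / m ^ (l-1-i) % m = (d i : ℕ) := by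
  have hq : 0 < m ^ (l-1-i) := Nat.pow_pos hm
  have hsplit : ∑ j ∈ Finset.range l, (d j : ℕ) * m ^ (l-1-j)
      = (∑ j ∈ Finset.range (i+1), (d j : ℕ) * m ^ (i-j)) * m ^ (l-1-i)
        + ∑ j ∈ Finset.Ico (i+1) l, (d j : ℕ) * m ^ (l-1-j) := by
    rw [Finset.range_eq_Ico, ← Finset.sum_Ico_consecutive _ (Nat.zero_le (i+1)) hi,
      ← Finset.range_eq_Ico, Finset.sum_mul]
    congr 1
    refine Finset.sum_congr rfl fun j hj => ?_
    simp only [Finset.mem_range] at hj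
    have : l - 1 - j = (i - j) + (l - 1 - i) := by omega
    rw [this, pow_add, mul_assoc]
  rw [hsplit, add_comm, Nat.add_mul_div_right _ _ hq,
    Nat.div_eq_of_lt (stmt14_tail_lt m hm d l i), zero_add]
  rw [Finset.sum_range_succ, Nat.sub_self, pow_zero, mul_one]
  have hdvd : ∀ j ∈ Finset.range i, (d j : ℕ) * m ^ (i-j) = m * ((d j : ℕ) * m ^ (i - j - 1)) := by
    intro j hj
    simp only [Finset.mem_range] at hj
    obtain ⟨e, he⟩ : ∃ e, i - j = e + 1 := ⟨i - j - 1, by omega⟩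
    rw [he, pow_succ', Nat.add_sub_cancel]
    ring
  rw [Finset.sum_congr rfl hdvd, ← Finset.mul_sum, Nat.mul_add_mod]
  exact Nat.mod_eq_of_lt (d i).isLt

lemma stmt14_digit_eq (m l : ℕ) [NeZero m] (hm : 1 ≤ m) (k : ℕ) (d : ℕ → Fin m)
    (hd : k = ∑ i ∈ Finset.range l, (d i : ℕ) * m ^ (l - 1 - i))
    (x : ℝ) (hx : x ∈ Set.Ico ((k : ℝ) / (m : ℝ) ^ l) (((k : ℝ) + 1) / (m : ℝ) ^ l))
    (i : ℕ) (hi : i < l) : digit m x i = d i := by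
  have hm0 : (0:ℝ) < (m:ℝ) := by exact_mod_cast Nat.pos_of_ne_zero (NeZero.ne m)
  have hqn : 0 < m ^ (l-1-i) := Nat.pow_pos hm
  have hq0 : (0:ℝ) < ((m ^ (l-1-i) : ℕ) : ℝ) := by exact_mod_cast hqn
  have hp0 : (0:ℝ) < (m:ℝ) ^ (i+1) := pow_pos hm0 _
  have hl0 : (0:ℝ) < (m:ℝ) ^ l := pow_pos hm0 _
  have hpow : (m:ℝ) ^ l = (m:ℝ) ^ (i+1) * ((m ^ (l-1-i) : ℕ) : ℝ) := by
    push_cast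
    rw [← pow_add]
    congr 1
    omega
  set a : ℕ := k / m ^ (l-1-i) with ha
  have hfloor : ⌊x * (m : ℝ) ^ (i + 1)⌋ = (a : ℤ) := by
    rw [Int.floor_eq_iff]
    constructor
    · calc ((a : ℤ) : ℝ) = ((a : ℕ) : ℝ) := by push_cast; ring
        _ ≤ (k : ℝ) / ((m ^ (l-1-i) : ℕ) : ℝ) := by
            rw [ha]; exact_mod_cast Nat.cast_div_le
        _ = (k : ℝ) / (m:ℝ) ^ l * (m:ℝ) ^ (i+1) := by
            rw [hpow]; field_simp
        _ ≤ x * (m:ℝ) ^ (i+1) := by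
            exact mul_le_mul_of_nonneg_right hx.1 (le_of_lt hp0)
    · have hnat : k + 1 ≤ (a + 1) * m ^ (l-1-i) := by
        have h1 := Nat.div_add_mod k (m ^ (l-1-i))
        have h2 := Nat.mod_lt k hqn
        have h3 : (a + 1) * m ^ (l-1-i) = m ^ (l-1-i) * a + m ^ (l-1-i) := by ring
        rw [h3, ha]
        omega
      calc x * (m:ℝ) ^ (i+1) < ((k:ℝ) + 1) / (m:ℝ) ^ l * (m:ℝ) ^ (i+1) :=
            mul_lt_mul_of_pos_right hx.2 hp0
        _ = ((k:ℝ) + 1) / ((m ^ (l-1-i) : ℕ) : ℝ) := by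
            rw [hpow]; field_simp
        _ ≤ ((a : ℤ) : ℝ) + 1 := by
            rw [div_le_iff₀ hq0]
            have : ((k:ℝ) + 1) ≤ ((a:ℝ) + 1) * ((m ^ (l-1-i) : ℕ) : ℝ) := by
              exact_mod_cast hnat
            push_cast at this ⊢
            linarith
  have : digit m x i = ⟨a % m, Nat.mod_lt _ (Nat.pos_of_ne_zero (NeZero.ne m))⟩ := by
    unfold digit
    congr 1
    rw [hfloor, Int.toNat_natCast]
  rw [this]
  apply Fin.ext
  show a % m = (d i : ℕ)
  rw [ha, hd]
  exact stmt14_extract m l hm d i hi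

theorem stmt14 (m : ℕ) [NeZero m] (hm : 2 ≤ m) (l : ℕ) (π : Equiv.Perm (Fin m))
    (k : ℕ) (hk : k < m ^ l) (d : ℕ → Fin m)
    (hd : k = ∑ i ∈ Finset.range l, (d i : ℕ) * m ^ (l - 1 - i)) :
    (∀ x ∈ Set.Ico ((k : ℝ) / (m : ℝ) ^ l) (((k : ℝ) + 1) / (m : ℝ) ^ l),
      ∀ y ∈ Set.Ico ((k : ℝ) / (m : ℝ) ^ l) (((k : ℝ) + 1) / (m : ℝ) ^ l),
        rho m l π x - x = rho m l π y - y) ∧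
    (∀ k' : ℕ, k' = ∑ i ∈ Finset.range l, (π (d i) : ℕ) * m ^ (l - 1 - i) →
      Set.BijOn (rho m l π)
        (Set.Ico ((k : ℝ) / (m : ℝ) ^ l) (((k : ℝ) + 1) / (m : ℝ) ^ l))
        (Set.Ico ((k' : ℝ) / (m : ℝ) ^ l) (((k' : ℝ) + 1) / (m : ℝ) ^ l))) := by
  have hm1 : 1 ≤ m := le_trans one_le_two hm
  have hm0 : (0:ℝ) < (m:ℝ) := by exact_mod_cast Nat.pos_of_ne_zero (NeZero.ne m)
  have hl0 : (0:ℝ) < (m:ℝ) ^ l := pow_pos hm0 _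
  set C : ℝ := ∑ i ∈ Finset.range l,
      (((π (d i) : ℕ) : ℝ) - ((d i : ℕ) : ℝ)) * ((m:ℝ)^(i+1))⁻¹ with hC
  have hrho : ∀ x ∈ Set.Ico ((k:ℝ)/(m:ℝ)^l) (((k:ℝ)+1)/(m:ℝ)^l),
      rho m l π x = x + C := by
    intro x hx
    unfold rho
    rw [hC]
    congr 1
    refine Finset.sum_congr rfl fun i hi => ?_
    rw [stmt14_digit_eq m l hm1 k d hd x hx i (Finset.mem_range.mp hi)]
  constructor
  · intro x hx y hy
    rw [hrho x hx, hrho y hy]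
    ring
  · intro k' hk'
    have hkC : (k':ℝ)/(m:ℝ)^l - (k:ℝ)/(m:ℝ)^l = C := by
      rw [hC, hk', hd]
      push_cast
      rw [Finset.sum_div, Finset.sum_div, ← Finset.sum_sub_distrib]
      refine Finset.sum_congr rfl fun i hi => ?_
      simp only [Finset.mem_range] at hi
      have hp : (m:ℝ)^l = (m:ℝ)^(i+1) * (m:ℝ)^(l-1-i) := by
        rw [← pow_add]; congr 1; omega
      have h1 : (m:ℝ)^(i+1) ≠ 0 := ne_of_gt (pow_pos hm0 _)
      have h2 : (m:ℝ)^(l-1-i) ≠ 0 := ne_of_gt (pow_pos hm0 _)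
      rw [hp]
      field_simp
    have hone : ∀ n : ℕ, ((n:ℝ)+1)/(m:ℝ)^l = (n:ℝ)/(m:ℝ)^l + 1/(m:ℝ)^l := by
      intro n; ring
    refine ⟨?_, ?_, ?_⟩
    · intro x hx
      rw [hrho x hx]
      rcases hx with ⟨hx1, hx2⟩
      constructor
      · linarith
      · rw [hone k'] at *
        rw [hone k] at hx2
        linarith
    · intro x hx y hy hxy
      rw [hrho x hx, hrho y hy] at hxy
      linarith
    · intro y hy
      rcases hy with ⟨hy1, hy2⟩
      have hmem : y - C ∈ Set.Ico ((k:ℝ)/(m:ℝ)^l) (((k:ℝ)+1)/(m:ℝ)^l) := by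
        constructor
        · linarith
        · rw [hone k]
          rw [hone k'] at hy2
          linarith
      exact ⟨y - C, hmem, by rw [hrho _ hmem]; ring⟩
end

section
/- Let m ≥ 2 and l : ℕ, and let f : ℝ → ℝ be an observable that depends only on the pattern of equality of the first l base-m digits, i.e. assume that for all x, y ∈ [0,1), if for all i, j < l one has c_i(x) = c_j(x) ↔ c_i(y) = c_j(y), then f(x) = f(y). Then f is invariant under all Gödel recodings: for every permutation π of Fin m and every x ∈ [0,1), f(ρ_π(x)) = f(x), where ρ_π is the cell-permutation map at depth l. -/
section aux
variable {m : ℕ} [NeZero m]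

lemma digit_cast_int (hm : 2 ≤ m) {x : ℝ} (hx : 0 ≤ x) (i : ℕ) :
    ((digit m x i : ℕ) : ℤ) = ⌊x * (m:ℝ) ^ (i+1)⌋ % m := by
  have h0 : (0:ℤ) ≤ ⌊x * (m:ℝ)^(i+1)⌋ := Int.floor_nonneg.2 (by positivity)
  show (((⌊x * (m:ℝ)^(i+1)⌋).toNat % m : ℕ) : ℤ) = _
  push_cast
  rw [Int.toNat_of_nonneg h0]

lemma floor_rec (hm : 2 ≤ m) {x : ℝ} (hx : 0 ≤ x) (j : ℕ) :
    ⌊x * (m:ℝ)^(j+1)⌋ = m * ⌊x * (m:ℝ)^j⌋ + ⌊x * (m:ℝ)^(j+1)⌋ % m := by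
  have hM : (0:ℝ) < (m:ℝ) := by positivity
  have h1 : x * (m:ℝ)^(j+1) = ((⌊x * (m:ℝ)^j⌋ * (m:ℤ) : ℤ) : ℝ)
      + Int.fract (x * (m:ℝ)^j) * m := by
    push_cast
    rw [Int.fract]
    ring
  have h2 : ⌊x * (m:ℝ)^(j+1)⌋ = ⌊x * (m:ℝ)^j⌋ * m + ⌊Int.fract (x * (m:ℝ)^j) * m⌋ := by
    rw [h1, Int.floor_intCast_add]
  have h3 : (0:ℤ) ≤ ⌊Int.fract (x * (m:ℝ)^j) * m⌋ :=
    Int.floor_nonneg.2 (mul_nonneg (Int.fract_nonneg _) hM.le)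
  have h4 : ⌊Int.fract (x * (m:ℝ)^j) * m⌋ < (m:ℤ) := by
    rw [Int.floor_lt]
    push_cast
    have := Int.fract_lt_one (x * (m:ℝ)^j)
    nlinarith
  have h5 : ⌊x * (m:ℝ)^(j+1)⌋ % m = ⌊Int.fract (x * (m:ℝ)^j) * m⌋ := by
    rw [h2, mul_comm (⌊x * (m:ℝ)^j⌋) ((m:ℤ)), add_comm, Int.add_mul_emod_self_left,
      Int.emod_eq_of_lt h3 h4]
  rw [h5, h2]
  ring

lemma sum_digits (hm : 2 ≤ m) {x : ℝ} (hx : x ∈ Set.Ico (0:ℝ) 1) (l : ℕ) :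
    ∑ i ∈ Finset.range l, ((digit m x i : ℕ):ℝ) * ((m:ℝ)^(i+1))⁻¹
      = (⌊x * (m:ℝ)^l⌋ : ℝ) / (m:ℝ)^l := by
  have hM : (0:ℝ) < (m:ℝ) := by positivity
  induction l with
  | zero =>
    simp only [Finset.range_zero, Finset.sum_empty, pow_zero, mul_one, div_one]
    rw [Int.floor_eq_zero_iff.2 (by simpa using hx)]
    simp
  | succ l ih =>
    rw [Finset.sum_range_succ, ih]
    have h1 : ((⌊x * (m:ℝ)^(l+1)⌋ : ℤ) : ℝ)
        = m * (⌊x * (m:ℝ)^l⌋ : ℝ) + ((digit m x l : ℕ) : ℝ) := by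
      have h0 := floor_rec hm hx.1 l
      have hd := digit_cast_int hm hx.1 l
      rw [h0, ← hd]
      push_cast
      ring
    rw [h1]
    have hMl : ((m:ℝ)^l) ≠ 0 := by positivity
    have hMl1 : ((m:ℝ)^(l+1)) ≠ 0 := by positivity
    field_simp
    ring

lemma geom_sum_aux (hm : 2 ≤ m) (l : ℕ) :
    ∑ i ∈ Finset.range l, ((m:ℝ)-1) * ((m:ℝ)^(i+1))⁻¹ = 1 - ((m:ℝ)^l)⁻¹ := by
  have hM : (0:ℝ) < (m:ℝ) := by positivity
  induction l with
  | zero => simp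
  | succ l ih =>
    rw [Finset.sum_range_succ, ih]
    have h1 : ((m:ℝ)^l) ≠ 0 := by positivity
    have h2 : ((m:ℝ)^(l+1)) ≠ 0 := by positivity
    field_simp
    ring

lemma sum_bound (hm : 2 ≤ m) (l : ℕ) (e : ℕ → ℝ) (he0 : ∀ i, 0 ≤ e i)
    (he1 : ∀ i, e i ≤ (m:ℝ) - 1) {t : ℝ} (ht : t ∈ Set.Ico (0:ℝ) 1) :
    (∑ i ∈ Finset.range l, e i * ((m:ℝ)^(i+1))⁻¹ + t * ((m:ℝ)^l)⁻¹) ∈ Set.Ico (0:ℝ) 1 := by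
  have hM : (0:ℝ) < (m:ℝ) := by positivity
  have hMl : (0:ℝ) < ((m:ℝ)^l)⁻¹ := by positivity
  constructor
  · have : ∀ i ∈ Finset.range l, 0 ≤ e i * ((m:ℝ)^(i+1))⁻¹ := fun i _ => by
      have := he0 i; positivity
    have h := Finset.sum_nonneg this
    nlinarith [ht.1]
  · have h1 : ∑ i ∈ Finset.range l, e i * ((m:ℝ)^(i+1))⁻¹
        ≤ ∑ i ∈ Finset.range l, ((m:ℝ)-1) * ((m:ℝ)^(i+1))⁻¹ := by
      refine Finset.sum_le_sum fun i _ => ?_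
      have : (0:ℝ) < ((m:ℝ)^(i+1))⁻¹ := by positivity
      exact mul_le_mul_of_nonneg_right (he1 i) this.le
    rw [geom_sum_aux hm] at h1
    have h2 : t * ((m:ℝ)^l)⁻¹ < 1 * ((m:ℝ)^l)⁻¹ :=
      mul_lt_mul_of_pos_right ht.2 hMl
    nlinarith

end aux

theorem stmt15 (m : ℕ) [NeZero m] (hm : 2 ≤ m) (l : ℕ) (f : ℝ → ℝ)
    (hf : ∀ x ∈ Set.Ico (0 : ℝ) 1, ∀ y ∈ Set.Ico (0 : ℝ) 1,
      (∀ i < l, ∀ j < l, (digit m x i = digit m x j ↔ digit m y i = digit m y j)) →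
      f x = f y) :
    ∀ π : Equiv.Perm (Fin m), ∀ x ∈ Set.Ico (0 : ℝ) 1, f (rho m l π x) = f x := by
  intro π x hx
  have hM : (0:ℝ) < (m:ℝ) := by positivity
  set y := rho m l π x with hy
  -- rewrite y as sum of permuted digits plus fractional tail
  have hyrep : y = ∑ i ∈ Finset.range l, ((π (digit m x i) : ℕ) : ℝ) * ((m:ℝ)^(i+1))⁻¹
      + Int.fract (x * (m:ℝ)^l) * ((m:ℝ)^l)⁻¹ := by
    have hs := sum_digits hm hx l
    have hMl : ((m:ℝ)^l) ≠ 0 := by positivity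
    rw [hy, rho]
    simp only [sub_mul, Finset.sum_sub_distrib]
    rw [hs]
    field_simp
    simp only [Int.fract]
    ring
  have hfr : Int.fract (x * (m:ℝ)^l) ∈ Set.Ico (0:ℝ) 1 :=
    ⟨Int.fract_nonneg _, Int.fract_lt_one _⟩
  have hebound : ∀ (d : Fin m), ((d : ℕ) : ℝ) ≤ (m:ℝ) - 1 := by
    intro d
    have : (d : ℕ) ≤ m - 1 := Nat.le_pred_of_lt d.2
    have h2 : ((d:ℕ):ℝ) ≤ ((m - 1 : ℕ) : ℝ) := by exact_mod_cast this
    have : ((m - 1 : ℕ) : ℝ) = (m:ℝ) - 1 := by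
      have : 1 ≤ m := by omega
      push_cast [this]; ring
    linarith [h2, this.le]
  -- y ∈ [0,1)
  have hyIco : y ∈ Set.Ico (0:ℝ) 1 := by
    rw [hyrep]
    exact sum_bound hm l _ (fun i => by positivity) (fun i => hebound _) hfr
  -- digits of y for j < l
  have hdig : ∀ j < l, digit m y j = π (digit m x j) := by
    intro j hj
    -- compute y * m^(j+1)
    have hsplit : l = (j+1) + (l - (j+1)) := by omega
    set l' := l - (j+1) with hl'
    have hyM : y * (m:ℝ)^(j+1)
        = ((∑ i ∈ Finset.range (j+1), (π (digit m x i) : ℕ) * (m:ℤ)^(j-i) : ℤ) : ℝ)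
          + (∑ k ∈ Finset.range l', ((π (digit m x (j+1+k)) : ℕ) : ℝ) * ((m:ℝ)^(k+1))⁻¹
            + Int.fract (x * (m:ℝ)^l) * ((m:ℝ)^l')⁻¹) := by
      rw [hyrep, add_mul, Finset.sum_mul, hsplit, Finset.sum_range_add]
      push_cast
      rw [add_assoc]
      congr 1
      · refine Finset.sum_congr rfl fun i hi => ?_
        have hij : i ≤ j := by simpa [Nat.lt_succ_iff] using hi
        have hp : (m:ℝ)^(j+1) = (m:ℝ)^(i+1) * (m:ℝ)^(j-i) := by
          rw [← pow_add]; congr 1 <;> omega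
        rw [hp]
        have h0 : ((m:ℝ)^(i+1)) ≠ 0 := by positivity
        field_simp
      congr 1
      · refine Finset.sum_congr rfl fun k hk => ?_
        have hp : (m:ℝ)^(j+1+k+1) = (m:ℝ)^(j+1) * (m:ℝ)^(k+1) := by
          rw [← pow_add]; congr 1 <;> omega
        rw [hp, mul_inv]
        have h1 : ((m:ℝ)^(j+1)) ≠ 0 := by positivity
        have h2 : ((m:ℝ)^(k+1)) ≠ 0 := by positivity
        field_simp
      · have hp : (m:ℝ)^(j+1+l') = (m:ℝ)^(j+1) * (m:ℝ)^l' := by rw [← pow_add]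
        rw [hp, mul_inv]
        have h1 : ((m:ℝ)^(j+1)) ≠ 0 := by positivity
        field_simp
        try ring
    set N : ℤ := ∑ i ∈ Finset.range (j+1), (π (digit m x i) : ℕ) * (m:ℤ)^(j-i) with hN
    have hrIco : (∑ k ∈ Finset.range l', ((π (digit m x (j+1+k)) : ℕ) : ℝ) * ((m:ℝ)^(k+1))⁻¹
        + Int.fract (x * (m:ℝ)^l) * ((m:ℝ)^l')⁻¹) ∈ Set.Ico (0:ℝ) 1 :=
      sum_bound hm l' _ (fun k => by positivity) (fun k => hebound _) hfr
    have hfloor : ⌊y * (m:ℝ)^(j+1)⌋ = N := by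
      rw [hyM, Int.floor_intCast_add, Int.floor_eq_zero_iff.2 (by simpa using hrIco)]
      ring
    have hNmod : N % m = ((π (digit m x j) : ℕ) : ℤ) := by
      rw [hN, Finset.sum_range_succ]
      have hdvd : (m:ℤ) ∣ ∑ i ∈ Finset.range j, ((π (digit m x i) : ℕ) : ℤ) * (m:ℤ)^(j-i) := by
        refine Finset.dvd_sum fun i hi => ?_
        have : i < j := Finset.mem_range.1 hi
        exact Dvd.dvd.mul_left (dvd_pow_self (m:ℤ) (by omega)) _
      have hlt : ((π (digit m x j) : ℕ) : ℤ) < m := by exact_mod_cast (π (digit m x j)).2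
      have hge : (0:ℤ) ≤ ((π (digit m x j) : ℕ) : ℤ) := by positivity
      simp only [Nat.sub_self, pow_zero, mul_one]
      obtain ⟨c, hc⟩ := hdvd
      rw [hc, add_comm, Int.add_mul_emod_self_left, Int.emod_eq_of_lt hge hlt]
    have := digit_cast_int hm hyIco.1 j
    rw [hfloor, hNmod] at this
    exact Fin.ext (by exact_mod_cast this)
  refine hf y hyIco x hx fun i hi j hj => ?_
  rw [hdig i hi, hdig j hj]
  exact ⟨fun h => π.injective h, fun h => congrArg π h⟩
end

section
/- Let m ≥ 2 and let l, r : ℕ be the depths of the stack and input sides of the machine configuration space Y = [0,1)². Let π₁, π₂ be permutations of Fin m each fixing 0 (i.e. π₁(0) = 0 and π₂(0) = 0, so that the pair (π₁,π₂) ranges over the symmetry group S_{m−1} × S_{m−1} of Gödel recodings fixing the blank symbol). Let f : ℝ × ℝ → ℝ be an observable depending only on the patterns of equality of the first l digits of the first coordinate and of the first r digits of the second coordinate, i.e. assume that for all (x₁,x₂), (y₁,y₂) ∈ [0,1)², if (for all i, j < l, c_i(x₁) = c_j(x₁) ↔ c_i(y₁) = c_j(y₁)) and (for all i, j < r, c_i(x₂)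 = c_j(x₂) ↔ c_i(y₂) = c_j(y₂)), then f(x₁,x₂) = f(y₁,y₂). Then f is invariant under the recoding action: for all (x₁,x₂) ∈ [0,1)², f(ρ_{π₁}(x₁), ρ_{π₂}(x₂)) = f(x₁,x₂), where ρ_{π₁} is the cell-permutation map at depth l and ρ_{π₂} is the cell-permutation map at depth r. -/
/-- The value with base-`m` digits `d 0, …, d (n-1)` followed by tail `t / m^n`. -/
noncomputable def valS (m : ℕ) (d : ℕ → Fin m) (n : ℕ) (t : ℝ) : ℝ :=
  (∑ j ∈ Finset.range n, ((d j : ℕ) : ℝ) * ((m : ℝ) ^ (j + 1))⁻¹) + t * ((m : ℝ) ^ n)⁻¹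

lemma valS_succ {m : ℕ} (hm : 2 ≤ m) (d : ℕ → Fin m) (n : ℕ) (t : ℝ) :
    valS m d (n + 1) t = valS m d n ((((d n : ℕ) : ℝ) + t) / m) := by
  have hm0 : (m : ℝ) ≠ 0 := Nat.cast_ne_zero.mpr (by omega)
  unfold valS
  rw [Finset.sum_range_succ]
  field_simp
  ring

lemma valS_mem {m : ℕ} (hm : 2 ≤ m) (d : ℕ → Fin m) :
    ∀ n : ℕ, ∀ t : ℝ, 0 ≤ t → t < 1 → 0 ≤ valS m d n t ∧ valS m d n t < 1 := by
  have hm0 : (0 : ℝ) < (m : ℝ) := by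
    have h : 0 < m := by omega
    exact_mod_cast h
  intro n
  induction n with
  | zero =>
    intro t ht0 ht1
    simp only [valS, Finset.range_zero, Finset.sum_empty, pow_zero, inv_one, mul_one, zero_add]
    exact ⟨ht0, ht1⟩
  | succ n ih =>
    intro t ht0 ht1
    rw [valS_succ hm]
    have hd : ((d n : ℕ) : ℝ) + 1 ≤ (m : ℝ) := by
      have := (d n).isLt
      exact_mod_cast this
    refine ih _ (by positivity) ?_
    rw [div_lt_one hm0]
    linarith

lemma digit_valS {m : ℕ} [NeZero m] (hm : 2 ≤ m) (d : ℕ → Fin m) {t : ℝ}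
    (ht0 : 0 ≤ t) (ht1 : t < 1) {n k : ℕ} (hk : k < n) :
    digit m (valS m d n t) k = d k := by
  obtain ⟨p, rfl⟩ : ∃ p, n = (k + 1) + p := ⟨n - (k + 1), by omega⟩
  have hm0 : (m : ℝ) ≠ 0 := Nat.cast_ne_zero.mpr (by omega)
  set N : ℕ := ∑ j ∈ Finset.range (k + 1), (d j : ℕ) * m ^ (k - j) with hN
  have key : valS m d (k + 1 + p) t * (m : ℝ) ^ (k + 1)
      = (N : ℝ) + valS m (fun j => d (k + 1 + j)) p t := by
    unfold valS
    rw [Finset.sum_range_add, add_mul, add_mul, Finset.sum_mul, Finset.sum_mul, ← add_assoc]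
    congr 1
    congr 1
    · rw [hN]
      push_cast
      refine Finset.sum_congr rfl fun j hj => ?_
      have hj' : j ≤ k := by simpa [Nat.lt_succ_iff] using hj
      have hpow : (m : ℝ) ^ (k + 1) = (m : ℝ) ^ (j + 1) * (m : ℝ) ^ (k - j) := by
        rw [← pow_add]
        congr 1
        omega
      rw [hpow]
      field_simp
    · refine Finset.sum_congr rfl fun j _ => ?_
      have hpow : (m : ℝ) ^ (k + 1 + j + 1) = (m : ℝ) ^ (j + 1) * (m : ℝ) ^ (k + 1) := by
        rw [← pow_add]; congr 1; omega
      rw [hpow]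
      field_simp
    · have hpow : (m : ℝ) ^ (k + 1 + p) = (m : ℝ) ^ p * (m : ℝ) ^ (k + 1) := by
        rw [← pow_add]; congr 1; omega
      rw [hpow]
      field_simp
  have htail := valS_mem hm (fun j => d (k + 1 + j)) p t ht0 ht1
  have hfloor : ⌊valS m d (k + 1 + p) t * (m : ℝ) ^ (k + 1)⌋ = (N : ℤ) := by
    rw [key]
    have hcast : ((N : ℤ) : ℝ) = (N : ℝ) := by push_cast; ring
    rw [← hcast, Int.floor_intCast_add]
    have h0 : ⌊valS m (fun j => d (k + 1 + j)) p t⌋ = 0 := by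
      rw [Int.floor_eq_zero_iff]
      exact ⟨htail.1, htail.2⟩
    rw [h0, add_zero]
  have hmod : N % m = (d k : ℕ) := by
    have hdvd : m ∣ ∑ j ∈ Finset.range k, (d j : ℕ) * m ^ (k - j) :=
      Finset.dvd_sum fun j hj =>
        Dvd.dvd.mul_left (dvd_pow_self m (by have := Finset.mem_range.mp hj; omega)) _
    obtain ⟨c, hc⟩ := hdvd
    rw [hN, Finset.sum_range_succ, Nat.sub_self, pow_zero, mul_one, hc,
      Nat.mul_add_mod, Nat.mod_eq_of_lt (d k).isLt]
  apply Fin.ext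
  show (⌊valS m d (k + 1 + p) t * (m : ℝ) ^ (k + 1)⌋).toNat % m = (d k : ℕ)
  rw [hfloor, Int.toNat_natCast, hmod]

lemma digit_fract_rec {m : ℕ} [NeZero m] (hm : 2 ≤ m) {x : ℝ} (hx0 : 0 ≤ x) (j : ℕ) :
    ((digit m x j : ℕ) : ℤ) = ⌊(m : ℝ) * Int.fract (x * (m : ℝ) ^ j)⌋ ∧
    Int.fract (x * (m : ℝ) ^ (j + 1))
      = (m : ℝ) * Int.fract (x * (m : ℝ) ^ j)
        - ⌊(m : ℝ) * Int.fract (x * (m : ℝ) ^ j)⌋ := by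
  have hm0 : (0 : ℝ) < (m : ℝ) := by
    have h : 0 < m := by omega
    exact_mod_cast h
  set u := Int.fract (x * (m : ℝ) ^ j) with hu
  have hu0 : 0 ≤ u := Int.fract_nonneg _
  have hu1 : u < 1 := Int.fract_lt_one _
  have hxj : 0 ≤ x * (m : ℝ) ^ j := by positivity
  have hfl0 : 0 ≤ ⌊x * (m : ℝ) ^ j⌋ := Int.floor_nonneg.mpr hxj
  have hmu0 : 0 ≤ (m : ℝ) * u := by positivity
  have hmu1 : (m : ℝ) * u < m := by nlinarith
  have hflmu0 : 0 ≤ ⌊(m : ℝ) * u⌋ := Int.floor_nonneg.mpr hmu0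
  have hflmu1 : ⌊(m : ℝ) * u⌋ < (m : ℤ) := Int.floor_lt.mpr (by push_cast; exact hmu1)
  have heq : x * (m : ℝ) ^ (j + 1)
      = ((⌊x * (m : ℝ) ^ j⌋ * (m : ℤ) : ℤ) : ℝ) + (m : ℝ) * u := by
    have h1 : (⌊x * (m : ℝ) ^ j⌋ : ℝ) + u = x * (m : ℝ) ^ j := Int.floor_add_fract _
    push_cast
    calc x * (m : ℝ) ^ (j + 1) = (x * (m : ℝ) ^ j) * m := by ring
      _ = ((⌊x * (m : ℝ) ^ j⌋ : ℝ) + u) * m := by rw [h1]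
      _ = _ := by ring
  have hfl : ⌊x * (m : ℝ) ^ (j + 1)⌋ = ⌊x * (m : ℝ) ^ j⌋ * m + ⌊(m : ℝ) * u⌋ := by
    rw [heq, Int.floor_intCast_add]
  have hfr : Int.fract (x * (m : ℝ) ^ (j + 1)) = (m : ℝ) * u - ⌊(m : ℝ) * u⌋ := by
    rw [heq, Int.fract_intCast_add]
    exact (Int.self_sub_floor _).symm
  refine ⟨?_, hfr⟩
  have hdig : (digit m x j : ℕ) = (⌊x * (m : ℝ) ^ (j + 1)⌋).toNat % m := rfl
  obtain ⟨A, hA⟩ := Int.eq_ofNat_of_zero_le hfl0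
  obtain ⟨B, hB⟩ := Int.eq_ofNat_of_zero_le hflmu0
  have hBm : B < m := by
    rw [hB] at hflmu1
    exact_mod_cast hflmu1
  rw [hdig, hfl, hA, hB]
  rw [show ((A : ℤ)) * (m : ℤ) + (B : ℤ) = ((A * m + B : ℕ) : ℤ) from by push_cast; ring,
    Int.toNat_natCast, Nat.mul_comm A m, Nat.mul_add_mod, Nat.mod_eq_of_lt hBm]

lemma x_expand {m : ℕ} [NeZero m] (hm : 2 ≤ m) {x : ℝ} (hx0 : 0 ≤ x) (hx1 : x < 1) (l : ℕ) :
    x = valS m (digit m x) l (Int.fract (x * (m : ℝ) ^ l)) := by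
  induction l with
  | zero =>
    simp only [valS, Finset.range_zero, Finset.sum_empty, pow_zero, inv_one, mul_one,
      zero_add]
    exact (Int.fract_eq_self.mpr ⟨hx0, hx1⟩).symm
  | succ n ih =>
    rw [valS_succ hm]
    obtain ⟨ha, hb⟩ := digit_fract_rec hm hx0 n
    have hm0 : (m : ℝ) ≠ 0 := Nat.cast_ne_zero.mpr (by omega)
    have ht : (((digit m x n : ℕ) : ℝ) + Int.fract (x * (m : ℝ) ^ (n + 1))) / m
        = Int.fract (x * (m : ℝ) ^ n) := by
      have ha' : ((digit m x n : ℕ) : ℝ) = (⌊(m : ℝ) * Int.fract (x * (m : ℝ) ^ n)⌋ : ℝ) := by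
        exact_mod_cast congrArg (fun z : ℤ => (z : ℝ)) ha
      rw [hb, ha']
      field_simp
      ring
    rw [ht]
    exact ih

lemma rho_eq {m : ℕ} [NeZero m] (hm : 2 ≤ m) {x : ℝ} (hx0 : 0 ≤ x) (hx1 : x < 1)
    (l : ℕ) (π : Equiv.Perm (Fin m)) :
    rho m l π x = valS m (fun i => π (digit m x i)) l (Int.fract (x * (m : ℝ) ^ l)) := by
  have hx := x_expand hm hx0 hx1 l
  calc rho m l π x
      = x + ∑ i ∈ Finset.range l,
          (((π (digit m x i) : ℕ) : ℝ) - ((digit m x i : ℕ) : ℝ)) * ((m : ℝ) ^ (i + 1))⁻¹ :=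
        rfl
    _ = valS m (digit m x) l (Int.fract (x * (m : ℝ) ^ l)) + ∑ i ∈ Finset.range l,
          (((π (digit m x i) : ℕ) : ℝ) - ((digit m x i : ℕ) : ℝ)) * ((m : ℝ) ^ (i + 1))⁻¹ := by
        rw [← hx]
    _ = valS m (fun i => π (digit m x i)) l (Int.fract (x * (m : ℝ) ^ l)) := by
        unfold valS
        rw [add_right_comm, ← Finset.sum_add_distrib]
        congr 1
        refine Finset.sum_congr rfl fun i _ => ?_
        ring

theorem stmt16 (m : ℕ) [NeZero m] (hm : 2 ≤ m) (l r : ℕ)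
    (π₁ π₂ : Equiv.Perm (Fin m)) (hπ₁ : π₁ 0 = 0) (hπ₂ : π₂ 0 = 0)
    (f : ℝ × ℝ → ℝ)
    (hf : ∀ x ∈ Set.Ico (0 : ℝ) 1 ×ˢ Set.Ico (0 : ℝ) 1,
          ∀ y ∈ Set.Ico (0 : ℝ) 1 ×ˢ Set.Ico (0 : ℝ) 1,
      (∀ i < l, ∀ j < l,
        (digit m x.1 i = digit m x.1 j ↔ digit m y.1 i = digit m y.1 j)) →
      (∀ i < r, ∀ j < r,
        (digit m x.2 i = digit m x.2 j ↔ digit m y.2 i = digit m y.2 j)) →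
      f x = f y) :
    ∀ x ∈ Set.Ico (0 : ℝ) 1 ×ˢ Set.Ico (0 : ℝ) 1,
      f (rho m l π₁ x.1, rho m r π₂ x.2) = f x := by
  rintro ⟨x₁, x₂⟩ ⟨⟨h10, h11⟩, ⟨h20, h21⟩⟩
  have hr1 := rho_eq hm h10 h11 l π₁
  have hr2 := rho_eq hm h20 h21 r π₂
  have hf1 : 0 ≤ Int.fract (x₁ * (m : ℝ) ^ l) := Int.fract_nonneg _
  have hf1' : Int.fract (x₁ * (m : ℝ) ^ l) < 1 := Int.fract_lt_one _
  have hf2 : 0 ≤ Int.fract (x₂ * (m : ℝ) ^ r) := Int.fract_nonneg _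
  have hf2' : Int.fract (x₂ * (m : ℝ) ^ r) < 1 := Int.fract_lt_one _
  have hmem1 := valS_mem hm (fun i => π₁ (digit m x₁ i)) l _ hf1 hf1'
  have hmem2 := valS_mem hm (fun i => π₂ (digit m x₂ i)) r _ hf2 hf2'
  have hd1 : ∀ k < l, digit m (rho m l π₁ x₁) k = π₁ (digit m x₁ k) := fun k hk => by
    rw [hr1]; exact digit_valS hm _ hf1 hf1' hk
  have hd2 : ∀ k < r, digit m (rho m r π₂ x₂) k = π₂ (digit m x₂ k) := fun k hk => by
    rw [hr2]; exact digit_valS hm _ hf2 hf2' hk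
  apply hf (rho m l π₁ x₁, rho m r π₂ x₂) ?_ (x₁, x₂) ⟨⟨h10, h11⟩, ⟨h20, h21⟩⟩
  · intro i hi j hj
    simp only [hd1 i hi, hd1 j hj]
    exact π₁.apply_eq_iff_eq
  · intro i hi j hj
    simp only [hd2 i hi, hd2 j hj]
    exact π₂.apply_eq_iff_eq
  · rw [hr1, hr2]
    exact ⟨⟨hmem1.1, hmem1.2⟩, ⟨hmem2.1, hmem2.2⟩⟩
end
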